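/- arXiv:2002.07256 — 4 statements merged into one kernel-verified Lean document; each statement's English description precedes it below -/
import Mathlib

section
/- Let k ≥ 2 be a natural number and let S ⊆ ℕ be a k-automatic set. If limsup_{N→∞} π_S(N)/N = 1, then liminf_{N→∞} π_S(N)/N = 1. -/
open Filter

/-- A sequence `h : ℕ → Δ` is `k`-automatic if there is a DFAO (finite state set `Q`,
initial state `q₀`, transition function `δ`, output function `τ`) computing `h n` by
reading the base-`k` digits of `n` from the most significant digit to the least. -/
def IsAutomaticSeq {Δ : Type*} (k : ℕ) (h : ℕ → Δ) : Prop :=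
  ∃ (Q : Type) (_ : Fintype Q) (q₀ : Q) (δ : Q → ℕ → Q) (τ : Q → Δ),
    ∀ n : ℕ, h n = τ (((Nat.digits k n).reverse).foldl δ q₀)

/-- A set `S ⊆ ℕ` is `k`-automatic if its characteristic function is `k`-automatic. -/
def IsAutomaticSet (k : ℕ) (S : Set ℕ) : Prop :=
  IsAutomaticSeq k (S.indicator fun _ => (1 : ℕ))

/-- `piCount S N` is the number of elements of `S` that are less than `N`. -/
noncomputable def piCount (S : Set ℕ) (N : ℕ) : ℕ := (S ∩ Set.Iio N).ncard

section AuxDev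
open Polynomial Matrix

namespace AutoAux

noncomputable def Complex.abs : AbsoluteValue ℂ ℝ := NormedField.toAbsoluteValue ℂ

lemma Complex.abs_apply' (z : ℂ) : Complex.abs z = ‖z‖ := rfl

lemma Complex.dist_eq (z w : ℂ) : dist z w = Complex.abs (z - w) := _root_.Complex.dist_eq z w

lemma Complex.abs_ofReal (r : ℝ) : Complex.abs (r : ℂ) = |r| := by
  rw [Complex.abs_apply', Complex.norm_real, Real.norm_eq_abs]

lemma Complex.abs_natCast (n : ℕ) : Complex.abs (n : ℂ) = n := by
  rw [Complex.abs_apply', Complex.norm_natCast]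

lemma Complex.normSq_eq_abs (x : ℂ) : Complex.normSq x = Complex.abs x ^ 2 := by
  rw [Complex.abs_apply', Complex.normSq_eq_norm_sq]


lemma piCount_eq_card_of_iff (T : Set ℕ) (N : ℕ) (P : ℕ → Prop) [DecidablePred P]
    (h : ∀ n, n ∈ T ↔ P n) :
    piCount T N = ((Finset.range N).filter P).card := by
  rw [piCount, ← Set.ncard_coe_finset]
  congr 1
  ext n
  simp only [Finset.coe_filter, Finset.mem_range, Set.mem_inter_iff, Set.mem_Iio,
    Set.mem_setOf_eq, h n]
  tauto

lemma piCount_mono (S : Set ℕ) {N N' : ℕ} (h : N ≤ N') : piCount S N ≤ piCount S N' := by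
  apply Set.ncard_le_ncard
  · exact Set.inter_subset_inter_right S (Set.Iio_subset_Iio h)
  · exact (Set.finite_Iio N').inter_of_right S

lemma ncard_Iio (N : ℕ) : (Set.Iio N).ncard = N := by
  rw [← Finset.coe_range, Set.ncard_coe_finset, Finset.card_range]

lemma piCount_le (S : Set ℕ) (N : ℕ) : piCount S N ≤ N := by
  calc piCount S N ≤ (Set.Iio N).ncard :=
        Set.ncard_le_ncard Set.inter_subset_right (Set.finite_Iio N)
    _ = N := ncard_Iio N

lemma piCount_add_compl (S : Set ℕ) (N : ℕ) : piCount S N + piCount Sᶜ N = N := by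
  have hdisj : Disjoint (S ∩ Set.Iio N) (Sᶜ ∩ Set.Iio N) :=
    Set.disjoint_of_subset Set.inter_subset_left Set.inter_subset_left disjoint_compl_right
  have h1 : (S ∩ Set.Iio N ∪ Sᶜ ∩ Set.Iio N) = Set.Iio N := by
    rw [← Set.union_inter_distrib_right, Set.union_compl_self, Set.univ_inter]
  rw [piCount, piCount, ← Set.ncard_union_eq hdisj ((Set.finite_Iio N).inter_of_right S)
    ((Set.finite_Iio N).inter_of_right Sᶜ), h1, ncard_Iio]


noncomputable def shift : (ℕ → ℂ) →ₗ[ℂ] (ℕ → ℂ) where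
  toFun u := fun n => u (n+1)
  map_add' u v := rfl
  map_smul' c u := rfl

@[simp] lemma shift_apply (u : ℕ → ℂ) (n : ℕ) : shift u n = u (n+1) := rfl

lemma shift_pow_apply (i : ℕ) (u : ℕ → ℂ) (n : ℕ) : (shift^i) u n = u (n+i) := by
  induction i generalizing u n with
  | zero => rfl
  | succ i ih =>
    rw [pow_succ]
    have : (shift^i * shift) u n = (shift^i) (shift u) n := rfl
    rw [this, ih]
    simp [add_assoc]

lemma aeval_shift_apply (p : Polynomial ℂ) (u : ℕ → ℂ) (n : ℕ) :
    (aeval shift p) u n = ∑ i ∈ Finset.range (p.natDegree + 1), p.coeff i * u (n + i) := by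
  rw [Polynomial.aeval_eq_sum_range]
  have : ((∑ i ∈ Finset.range (p.natDegree + 1), p.coeff i • shift ^ i) u) n
      = ∑ i ∈ Finset.range (p.natDegree + 1), (p.coeff i • (shift ^ i)) u n := by
    rw [LinearMap.sum_apply]
    simp [Finset.sum_apply]
  rw [this]
  refine Finset.sum_congr rfl fun i _ => ?_
  simp [shift_pow_apply]

def Bdd (u : ℕ → ℂ) : Prop := ∃ B : ℝ, ∀ n, Complex.abs (u n) ≤ B

lemma Bdd.aeval (p : Polynomial ℂ) {u : ℕ → ℂ} (hu : Bdd u) : Bdd ((aeval shift p) u) := by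
  obtain ⟨B, hB⟩ := hu
  refine ⟨∑ i ∈ Finset.range (p.natDegree + 1), Complex.abs (p.coeff i) * B, fun n => ?_⟩
  rw [aeval_shift_apply]
  refine le_trans (Complex.abs.sum_le _ _) (Finset.sum_le_sum fun i _ => ?_)
  rw [_root_.map_mul]
  exact mul_le_mul_of_nonneg_left (hB _) (AbsoluteValue.nonneg _ _)

lemma aeval_X_sub_C_apply (a : ℂ) (u : ℕ → ℂ) (n : ℕ) :
    (aeval shift (X - C a)) u n = u (n+1) - a * u n := by
  rw [_root_.map_sub, LinearMap.sub_apply]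
  simp [Polynomial.aeval_X, Polynomial.aeval_C, Module.algebraMap_end_apply]

/-- step-down: from `(X-Ca)^(e+1)` annihilation to `(X-Ca)^e` annihilation of the derived seq. -/
lemma step_down (a : ℂ) (e : ℕ) {u : ℕ → ℂ} (h : (aeval shift ((X - C a)^(e+1))) u = 0) :
    (aeval shift ((X - C a)^e)) ((aeval shift (X - C a)) u) = 0 := by
  have : (aeval shift ((X - C a)^e)) ((aeval shift (X - C a)) u)
      = (aeval shift ((X - C a)^(e+1))) u := by
    rw [pow_succ, _root_.map_mul]
    rfl
  rw [this, h]

lemma geom_of_first_order {a : ℂ} {u : ℕ → ℂ} (h : (aeval shift (X - C a)) u = 0) :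
    ∀ n, u n = a^n * u 0 := by
  intro n
  induction n with
  | zero => simp
  | succ n ih =>
    have h0 : u (n+1) - a * u n = 0 := by
      have := congrFun h n
      rwa [aeval_X_sub_C_apply] at this
    have : u (n+1) = a * u n := by linear_combination h0
    rw [this, ih, pow_succ]; ring

/-- |a| > 1 : annihilated bounded sequence is 0. -/
lemma zero_of_abs_gt_one {a : ℂ} (ha : 1 < Complex.abs a) :
    ∀ e : ℕ, ∀ u : ℕ → ℂ, Bdd u → (aeval shift ((X - C a)^e)) u = 0 → u = 0 := by
  intro e
  induction e with
  | zero => intro u _ h; simpa using h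
  | succ e ih =>
    intro u hu h
    have hv : (aeval shift (X - C a)) u = 0 :=
      ih _ (hu.aeval _) (step_down a e h)
    have hg := geom_of_first_order hv
    have hu0 : u 0 = 0 := by
      by_contra h0
      obtain ⟨B, hB⟩ := hu
      obtain ⟨n, hn⟩ := (tendsto_pow_atTop_atTop_of_one_lt ha).eventually_ge_atTop
        ((B + 1) / Complex.abs (u 0)) |>.exists
      have habs : Complex.abs (u n) = (Complex.abs a)^n * Complex.abs (u 0) := by
        rw [hg n, _root_.map_mul, _root_.map_pow]
      have hpos : 0 < Complex.abs (u 0) := by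
        simpa [AbsoluteValue.pos_iff] using h0
      have : (B+1) ≤ Complex.abs (u n) := by
        rw [habs]
        calc B + 1 = ((B+1) / Complex.abs (u 0)) * Complex.abs (u 0) := by
              field_simp
          _ ≤ (Complex.abs a)^n * Complex.abs (u 0) := by
              exact mul_le_mul_of_nonneg_right hn hpos.le
      linarith [hB n]
    funext n
    simp [hg n, hu0]

/-- |a| = 1 : annihilated bounded sequence is exactly geometric. -/
lemma geom_of_abs_eq_one {a : ℂ} (ha : Complex.abs a = 1) :
    ∀ e : ℕ, ∀ u : ℕ → ℂ, Bdd u → (aeval shift ((X - C a)^e)) u = 0 →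
      ∀ n, u n = u 0 * a^n := by
  intro e
  have ha0 : a ≠ 0 := by
    intro h; rw [h] at ha; simp at ha
  induction e with
  | zero =>
    intro u _ h
    have : u = 0 := by simpa using h
    simp [this]
  | succ e ih =>
    intro u hu h
    have hv := ih _ (hu.aeval (X - C a)) (step_down a e h)
    set v := (aeval shift (X - C a)) u with hvdef
    -- u (n+1) = a * u n + v n,  v n = v 0 * a^n
    have hrec : ∀ n, u (n+1) = a * u n + v 0 * a^n := by
      intro n
      have h1 : v n = u (n+1) - a * u n := by rw [hvdef, aeval_X_sub_C_apply]
      have h2 := hv n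
      rw [h1] at h2
      linear_combination h2
    have hform : ∀ n, u n = a^n * (u 0 + n * (v 0 / a)) := by
      intro n
      induction n with
      | zero => simp
      | succ n ihn =>
        rw [hrec n, ihn]
        push_cast
        field_simp
        ring
    -- boundedness forces v 0 = 0
    have hv0 : v 0 = 0 := by
      by_contra h0
      obtain ⟨B, hB⟩ := hu
      have hvpos : 0 < Complex.abs (v 0 / a) := by
        simp [AbsoluteValue.pos_iff, h0, ha0]
      obtain ⟨n, hn⟩ := exists_nat_gt ((B + Complex.abs (u 0)) / Complex.abs (v 0 / a))
      have h1 : Complex.abs (u n) = Complex.abs (u 0 + n * (v 0 / a)) := by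
        rw [hform n, _root_.map_mul, _root_.map_pow, ha, one_pow, one_mul]
      have h3 : Complex.abs ((n:ℂ) * (v 0 / a))
          ≤ Complex.abs (u 0 + n * (v 0 / a)) + Complex.abs (u 0) := by
        have h4 := Complex.abs.add_le (u 0 + n * (v 0 / a)) (-(u 0))
        simpa using h4
      have h5 : Complex.abs ((n:ℂ) * (v 0 / a)) = n * Complex.abs (v 0 / a) := by
        rw [_root_.map_mul, Complex.abs_natCast]
      have h6 : B + Complex.abs (u 0) < n * Complex.abs (v 0 / a) :=
        (div_lt_iff₀ hvpos).mp hn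
      have h7 := hB n
      rw [h1] at h7
      linarith
    intro n
    have : v 0 / a = 0 := by rw [hv0, zero_div]
    rw [hform n, this]
    ring

/-- |a| < 1 : annihilated bounded sequence tends to 0. -/
lemma tendsto_zero_of_abs_lt_one {a : ℂ} (ha : Complex.abs a < 1) :
    ∀ e : ℕ, ∀ u : ℕ → ℂ, Bdd u → (aeval shift ((X - C a)^e)) u = 0 →
      Tendsto u atTop (nhds 0) := by
  intro e
  induction e with
  | zero =>
    intro u _ h
    have : u = 0 := by simpa using h
    rw [this]; exact tendsto_const_nhds
  | succ e ih =>
    intro u hu h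
    have hv : Tendsto ((aeval shift (X - C a)) u) atTop (nhds 0) :=
      ih _ (hu.aeval _) (step_down a e h)
    set v := (aeval shift (X - C a)) u with hvdef
    have hrec : ∀ n, u (n+1) = a * u n + v n := by
      intro n
      have h1 : v n = u (n+1) - a * u n := by rw [hvdef, aeval_X_sub_C_apply]
      linear_combination -h1
    obtain ⟨B, hB⟩ := hu
    have hB0 : 0 ≤ B := le_trans (AbsoluteValue.nonneg _ _) (hB 0)
    set r := Complex.abs a with hrdef
    have hr0 : 0 ≤ r := AbsoluteValue.nonneg _ _
    rw [Metric.tendsto_atTop]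
    intro ε hε
    have hε2 : 0 < ε/2 * (1 - r) := mul_pos (by linarith) (by linarith)
    obtain ⟨m₀, hm₀⟩ := (Metric.tendsto_atTop.mp hv (ε/2 * (1-r)) hε2)
    -- ∀ t, |u (m₀+t)| ≤ r^t * B + ε/2
    have key : ∀ t, Complex.abs (u (m₀ + t)) ≤ r^t * B + ε/2 := by
      intro t
      induction t with
      | zero => simpa using le_trans (hB m₀) (by linarith)
      | succ t iht =>
        have h1 : u (m₀ + t + 1) = a * u (m₀ + t) + v (m₀ + t) := hrec _
        have h2 : Complex.abs (v (m₀ + t)) ≤ ε/2 * (1-r) := by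
          have := hm₀ (m₀ + t) (by omega)
          rw [Complex.dist_eq, sub_zero] at this
          linarith
        have h3 : Complex.abs (u (m₀ + t + 1))
            ≤ r * Complex.abs (u (m₀ + t)) + ε/2 * (1-r) := by
          rw [h1]
          refine le_trans (Complex.abs.add_le _ _) ?_
          rw [_root_.map_mul]
          exact add_le_add le_rfl h2
        have h4 : r * Complex.abs (u (m₀ + t)) ≤ r * (r^t * B + ε/2) :=
          mul_le_mul_of_nonneg_left iht hr0
        have : m₀ + (t+1) = m₀ + t + 1 := by omega
        rw [this]
        calc Complex.abs (u (m₀ + t + 1)) ≤ r * (r^t * B + ε/2) + ε/2 * (1-r) := by linarith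
          _ = r^(t+1) * B + (r * (ε/2) + ε/2 * (1-r)) := by ring
          _ ≤ r^(t+1) * B + ε/2 := by nlinarith
    -- choose t₀ with r^t₀ * B < ε/2
    have htend : Tendsto (fun t => r^t * B) atTop (nhds 0) := by
      have h0 : Tendsto (fun t : ℕ => r^t) atTop (nhds 0) :=
        tendsto_pow_atTop_nhds_zero_of_lt_one hr0 ha
      simpa using h0.mul_const B
    obtain ⟨t₀, ht₀⟩ := (Metric.tendsto_atTop.mp htend (ε/4) (by positivity))
    refine ⟨m₀ + t₀, fun n hn => ?_⟩
    have hform : n = m₀ + (n - m₀) := by omega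
    have h5 := key (n - m₀)
    rw [← hform] at h5
    have h6 : r^(n - m₀) * B ≤ r^t₀ * B := by
      apply mul_le_mul_of_nonneg_right _ hB0
      exact pow_le_pow_of_le_one hr0 ha.le (by omega)
    have h7 := ht₀ t₀ le_rfl
    rw [Real.dist_eq, sub_zero, abs_of_nonneg (by positivity)] at h7
    rw [Complex.dist_eq, sub_zero]
    calc Complex.abs (u n) ≤ r^(n-m₀) * B + ε/2 := h5
      _ ≤ r^t₀ * B + ε/2 := by linarith
      _ < ε := by linarith

/-- single root: unified conclusion. -/
lemma single_root {a : ℂ} (e : ℕ) (u : ℕ → ℂ) (hu : Bdd u)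
    (h : (aeval shift ((X - C a)^e)) u = 0) :
    ∃ c : ℂ, (Complex.abs a = 1 ∨ c = 0) ∧
      Tendsto (fun n => u n - c * a^n) atTop (nhds 0) := by
  rcases lt_trichotomy (Complex.abs a) 1 with hlt | heq | hgt
  · refine ⟨0, Or.inr rfl, ?_⟩
    simpa using tendsto_zero_of_abs_lt_one hlt e u hu h
  · refine ⟨u 0, Or.inl heq, ?_⟩
    have := geom_of_abs_eq_one heq e u hu h
    have h0 : (fun n => u n - u 0 * a^n) = fun _ => 0 := by
      funext n; rw [this n]; ring
    rw [h0]; exact tendsto_const_nhds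
  · refine ⟨0, Or.inr rfl, ?_⟩
    have := zero_of_abs_gt_one hgt e u hu h
    rw [this]
    simpa using tendsto_const_nhds

/-- main decomposition over a finite set of roots with multiplicities. -/
lemma decomp (t : Finset ℂ) : ∀ (e : ℂ → ℕ) (u : ℕ → ℂ), Bdd u →
    (aeval shift (∏ l ∈ t, (X - C l)^(e l))) u = 0 →
    ∃ L : List (ℂ × ℂ), (∀ pr ∈ L, Complex.abs pr.1 = 1) ∧
      Tendsto (fun n => u n - (L.map fun pr => pr.2 * pr.1 ^ n).sum) atTop (nhds (0:ℂ)) := by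
  induction t using Finset.induction_on with
  | empty =>
    intro e u _ h
    simp only [Finset.prod_empty, _root_.map_one, Module.End.one_apply] at h
    refine ⟨[], by simp, ?_⟩
    simp only [List.map_nil, List.sum_nil, sub_zero]
    rw [show u = (fun _ => (0:ℂ)) from h]
    exact tendsto_const_nhds
  | @insert a s ha ih =>
    intro e u hu h
    rw [Finset.prod_insert ha] at h
    set f := (X - C a)^(e a) with hf
    set g := ∏ l ∈ s, (X - C l)^(e l) with hg
    have hcop : IsCoprime f g := by
      rw [hf, hg]
      apply IsCoprime.pow_left
      apply IsCoprime.prod_right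
      intro l hl
      apply IsCoprime.pow_right
      apply isCoprime_X_sub_C_of_isUnit_sub
      have : a ≠ l := fun hal => ha (hal ▸ hl)
      exact (sub_ne_zero.mpr this).isUnit
    obtain ⟨A, B, hAB⟩ := hcop
    -- u = u₁ + u₂
    set u₁ := (aeval shift (B * g)) u with hu₁
    set u₂ := (aeval shift (A * f)) u with hu₂
    have hsplit : ∀ n, u n = u₁ n + u₂ n := by
      intro n
      have h1 : (aeval shift (A * f + B * g)) u = u := by
        rw [hAB, _root_.map_one, Module.End.one_apply]
      have h2 := congrFun h1 n
      rw [_root_.map_add, LinearMap.add_apply, Pi.add_apply] at h2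
      rw [← h2, hu₁, hu₂]
      ring
    have hann₁ : (aeval shift f) u₁ = 0 := by
      rw [hu₁]
      have : (aeval shift f) ((aeval shift (B * g)) u) = (aeval shift (B * (f * g))) u := by
        rw [show B * (f * g) = f * (B * g) by ring]; simp [_root_.map_mul, Module.End.mul_apply]
      rw [this, _root_.map_mul, Module.End.mul_apply, h, _root_.map_zero]
    have hann₂ : (aeval shift g) u₂ = 0 := by
      rw [hu₂]
      have : (aeval shift g) ((aeval shift (A * f)) u) = (aeval shift (A * (f * g))) u := by
        rw [show A * (f * g) = g * (A * f) by ring]; simp [_root_.map_mul, Module.End.mul_apply]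
      rw [this, _root_.map_mul, Module.End.mul_apply, h, _root_.map_zero]
    obtain ⟨c, hc, htc⟩ := single_root (e a) u₁ (hu.aeval _) hann₁
    obtain ⟨L₂, hL₂, htL₂⟩ := ih e u₂ (hu.aeval _) hann₂
    rcases hc with habs | hc0
    · refine ⟨(a, c) :: L₂, ?_, ?_⟩
      · intro pr hpr
        rcases List.mem_cons.mp hpr with h' | h'
        · rw [h']; exact habs
        · exact hL₂ pr h'
      · have : (fun n => u n - ((((a,c) :: L₂).map fun pr => pr.2 * pr.1 ^ n).sum))
            = fun n => (u₁ n - c * a^n) + (u₂ n - (L₂.map fun pr => pr.2 * pr.1 ^ n).sum) := by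
          funext n
          rw [hsplit n]
          simp only [List.map_cons, List.sum_cons]
          ring
        rw [this]
        simpa using htc.add htL₂
    · refine ⟨L₂, hL₂, ?_⟩
      have : (fun n => u n - ((L₂.map fun pr => pr.2 * pr.1 ^ n).sum))
          = fun n => (u₁ n - c * a^n) + (u₂ n - (L₂.map fun pr => pr.2 * pr.1 ^ n).sum) := by
        funext n
        rw [hsplit n, hc0]
        ring
      rw [this]
      simpa using htc.add htL₂


lemma abs_pow_sub_one_mul {x : ℂ} (hx : Complex.abs x = 1) (p : ℕ) :
    ∀ j : ℕ, Complex.abs (x^(j*p) - 1) ≤ j * Complex.abs (x^p - 1) := by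
  intro j
  induction j with
  | zero => simp
  | succ j ih =>
    have h1 : x^((j+1)*p) - 1 = x^p * (x^(j*p) - 1) + (x^p - 1) := by
      rw [add_mul, one_mul, pow_add]; ring
    have h2 : Complex.abs (x^p) = 1 := by rw [_root_.map_pow, hx, one_pow]
    calc Complex.abs (x^((j+1)*p) - 1)
        ≤ Complex.abs (x^p * (x^(j*p) - 1)) + Complex.abs (x^p - 1) := by
          rw [h1]; exact Complex.abs.add_le _ _
      _ = Complex.abs (x^(j*p) - 1) + Complex.abs (x^p - 1) := by
          rw [_root_.map_mul, h2, one_mul]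
      _ ≤ j * Complex.abs (x^p - 1) + Complex.abs (x^p - 1) := by
          exact add_le_add_left ih _
      _ = (j+1 : ℕ) * Complex.abs (x^p - 1) := by push_cast; ring

lemma key_identity {x : ℂ} (hx : Complex.abs x = 1) (a s : ℕ) :
    Complex.abs (x^(a+s) - 1) = Complex.abs (x^s - (starRingEnd ℂ) (x^a)) := by
  have h2 : x^a * (starRingEnd ℂ) (x^a) = 1 := by
    rw [Complex.mul_conj]
    rw [Complex.normSq_eq_abs, _root_.map_pow, hx, one_pow]
    norm_num
  have h1 : x^a * (x^s - (starRingEnd ℂ) (x^a)) = x^(a+s) - 1 := by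
    rw [mul_sub, ← pow_add, h2]
  calc Complex.abs (x^(a+s) - 1)
      = Complex.abs (x^a) * Complex.abs (x^s - (starRingEnd ℂ) (x^a)) := by
        rw [← _root_.map_mul, h1]
    _ = Complex.abs (x^s - (starRingEnd ℂ) (x^a)) := by rw [_root_.map_pow, hx, one_pow, one_mul]

lemma simul_return (l : List ℂ) (hl : ∀ x ∈ l, Complex.abs x = 1) :
    ∀ η > 0, ∃ p, 1 ≤ p ∧ ∀ x ∈ l, Complex.abs (x^p - 1) ≤ η := by
  intro η hη
  set z : ℕ → (Fin l.length → ℂ) := fun m i => (l.get i)^m with hz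
  have hK : IsCompact (Set.univ.pi fun _ : Fin l.length => Metric.closedBall (0:ℂ) 1) :=
    isCompact_univ_pi fun _ => isCompact_closedBall _ _
  have hzK : ∀ m, z m ∈ Set.univ.pi fun _ : Fin l.length => Metric.closedBall (0:ℂ) 1 := by
    intro m
    rw [Set.mem_univ_pi]
    intro i
    rw [Metric.mem_closedBall, Complex.dist_eq, sub_zero, _root_.map_pow,
      hl (l.get i) (l.get_mem i), one_pow]
  obtain ⟨w, -, φ, hφ, hconv⟩ := hK.tendsto_subseq hzK
  obtain ⟨N, hN⟩ := Metric.tendsto_atTop.mp hconv (η/2) (by positivity)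
  have hlt : φ N < φ (N+1) := hφ (Nat.lt_succ_self N)
  refine ⟨φ (N+1) - φ N, by omega, fun x hx => ?_⟩
  obtain ⟨i, hi⟩ := List.mem_iff_get.mp hx
  have hd : dist (z (φ (N+1))) (z (φ N)) < η := by
    calc dist (z (φ (N+1))) (z (φ N))
        ≤ dist (z (φ (N+1))) w + dist (z (φ N)) w := dist_triangle_right _ _ _
      _ < η/2 + η/2 := by
          have h1 := hN (N+1) (Nat.le_succ N)
          have h2 := hN N le_rfl
          simp only [Function.comp] at h1 h2
          exact add_lt_add h1 h2
      _ = η := by ring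
  have hdi : dist (z (φ (N+1)) i) (z (φ N) i) < η := lt_of_le_of_lt (dist_le_pi_dist _ _ i) hd
  rw [Complex.dist_eq] at hdi
  have habs : Complex.abs x = 1 := hl x hx
  have hsplit : (φ (N+1)) = φ N + (φ (N+1) - φ N) := by omega
  have : z (φ (N+1)) i - z (φ N) i = x^(φ N) * (x^(φ (N+1) - φ N) - 1) := by
    simp only [hz, hi]
    rw [mul_sub, ← pow_add, mul_one, ← hsplit]
  rw [this, _root_.map_mul, _root_.map_pow, habs, one_pow, one_mul] at hdi
  exact hdi.le

lemma simul_return_large (l : List ℂ) (hl : ∀ x ∈ l, Complex.abs x = 1) :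
    ∀ η > 0, ∀ a : ℕ, ∃ t, a ≤ t ∧ ∀ x ∈ l, Complex.abs (x^t - 1) ≤ η := by
  intro η hη a
  obtain ⟨p, hp1, hp⟩ := simul_return l hl (η/(a+1)) (by positivity)
  refine ⟨(a+1)*p, ?_, fun x hx => ?_⟩
  · calc a ≤ a + 1 := Nat.le_succ a
      _ = (a+1)*1 := by ring
      _ ≤ (a+1)*p := Nat.mul_le_mul_left _ hp1
  · have h1 := abs_pow_sub_one_mul (hl x hx) p (a+1)
    have h2 := hp x hx
    have h4 : ((a+1:ℕ):ℝ) * Complex.abs (x^p - 1) ≤ ((a+1:ℕ):ℝ) * (η/(a+1)) :=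
      mul_le_mul_of_nonneg_left h2 (by positivity)
    have h5 : ((a+1:ℕ):ℝ) * (η/(a+1)) = η := by
      have hne : ((a:ℝ)+1) ≠ 0 := by positivity
      push_cast
      field_simp
    linarith

lemma bohr_syndetic (l : List ℂ) (hl : ∀ x ∈ l, Complex.abs x = 1) :
    ∀ δ > 0, ∃ R : ℕ, ∀ a : ℕ, ∃ τ, a ≤ τ ∧ τ ≤ a + R ∧
      ∀ x ∈ l, Complex.abs (x^τ - 1) ≤ δ := by
  intro δ hδ
  set z : ℕ → (Fin l.length → ℂ) := fun m i => (l.get i)^m with hz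
  set K := Set.univ.pi fun _ : Fin l.length => Metric.closedBall (0:ℂ) 1 with hKdef
  have hK : IsCompact K := isCompact_univ_pi fun _ => isCompact_closedBall _ _
  have hzK : ∀ m, z m ∈ K := by
    intro m
    rw [hKdef, Set.mem_univ_pi]
    intro i
    rw [Metric.mem_closedBall, Complex.dist_eq, sub_zero, hz, _root_.map_pow,
      hl (l.get i) (l.get_mem i), one_pow]
  set Y := closure (Set.range z) with hY
  have hYc : IsCompact Y :=
    IsCompact.of_isClosed_subset hK isClosed_closure
      (closure_minimal (Set.range_subset_iff.mpr hzK) hK.isClosed)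
  have hcover : Y ⊆ ⋃ s : ℕ, Metric.ball (z s) (δ/2) := by
    intro y hy
    obtain ⟨b, ⟨s, rfl⟩, hb⟩ := Metric.mem_closure_iff.mp hy (δ/2) (by positivity)
    exact Set.mem_iUnion.mpr ⟨s, Metric.mem_ball.mpr hb⟩
  obtain ⟨F, hF⟩ := hYc.elim_finite_subcover _ (fun s : ℕ => Metric.isOpen_ball) hcover
  refine ⟨F.sup id, fun a => ?_⟩
  set y : Fin l.length → ℂ := fun i => (starRingEnd ℂ) ((l.get i)^a) with hydef
  have hyY : y ∈ Y := by
    rw [hY, Metric.mem_closure_iff]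
    intro ε hε
    obtain ⟨t, hta, ht⟩ := simul_return_large l hl (ε/2) (by positivity) a
    refine ⟨z (t - a), ⟨t - a, rfl⟩, ?_⟩
    have hle : dist y (z (t-a)) ≤ ε/2 := by
      rw [dist_pi_le_iff (by positivity)]
      intro i
      rw [Complex.dist_eq]
      have habs := hl (l.get i) (l.get_mem i)
      have h1 : y i - z (t-a) i
          = (starRingEnd ℂ) ((l.get i)^a) - (l.get i)^(t-a) := by
        simp only [hydef, hz]
      rw [h1, AbsoluteValue.map_sub Complex.abs, ← key_identity habs a (t-a)]
      have h3 : a + (t - a) = t := by omega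
      rw [h3]
      exact ht _ (l.get_mem i)
    linarith
  obtain ⟨s, hsF, hs⟩ := Set.mem_iUnion₂.mp (hF hyY)
  rw [Metric.mem_ball] at hs
  refine ⟨a + s, Nat.le_add_right a s, add_le_add_right (Finset.le_sup (f := id) hsF) a,
    fun x hx => ?_⟩
  obtain ⟨i, hi⟩ := List.mem_iff_get.mp hx
  have habs : Complex.abs x = 1 := hl x hx
  rw [key_identity habs a s]
  have h1 : z s i - y i = x^s - (starRingEnd ℂ) (x^a) := by
    simp only [hz, hydef, hi]
  rw [← h1]
  have h2 : dist (z s i) (y i) ≤ dist (z s) y := dist_le_pi_dist _ _ i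
  rw [Complex.dist_eq] at h2
  have h3 : dist (z s) y < δ/2 := by rw [dist_comm]; exact hs
  linarith


variable {Q : Type} [Fintype Q] [DecidableEq Q]

def st (k : ℕ) (dlt : Q → ℕ → Q) (q0 : Q) (n : ℕ) : Q :=
  ((Nat.digits k n).reverse).foldl dlt q0

def pst (k : ℕ) (dlt : Q → ℕ → Q) (q0 : Q) (n : ℕ) : Q × Bool :=
  (st k dlt q0 n, decide (n ≠ 0))

def pdlt (dlt : Q → ℕ → Q) : (Q × Bool) → ℕ → (Q × Bool) :=
  fun x d => if x.2 = true ∨ d ≠ 0 then (dlt x.1 d, true) else (x.1, false)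

lemma pst_rec {k : ℕ} (hk : 2 ≤ k) (dlt : Q → ℕ → Q) (q0 : Q) (a d : ℕ) (hd : d < k) :
    pst k dlt q0 (k * a + d) = pdlt dlt (pst k dlt q0 a) d := by
  by_cases ha : a = 0
  · subst ha
    by_cases hd0 : d = 0
    · subst hd0
      simp [pst, pdlt, st]
    · have hdig : Nat.digits k d = [d] := by
        rw [Nat.digits_def' (by omega : 1 < k) (Nat.pos_of_ne_zero hd0)]
        rw [Nat.mod_eq_of_lt hd, Nat.div_eq_of_lt hd]
        simp
      simp [pst, pdlt, st, hdig, hd0]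
  · have ha1 : 1 ≤ a := Nat.pos_of_ne_zero ha
    have hka : k ≤ k * a := Nat.le_mul_of_pos_right k ha1
    have hn0 : k * a + d ≠ 0 := by omega
    have hdig : Nat.digits k (k*a+d) = d :: Nat.digits k a := by
      rw [Nat.digits_def' (by omega : 1 < k) (Nat.pos_of_ne_zero hn0)]
      have h1 : (k*a+d) % k = d := by rw [Nat.mul_add_mod, Nat.mod_eq_of_lt hd]
      have h2 : (k*a+d) / k = a := by
        rw [Nat.mul_add_div (by omega : 0 < k), Nat.div_eq_of_lt hd, add_zero]
      rw [h1, h2]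
    have hst : st k dlt q0 (k*a+d) = dlt (st k dlt q0 a) d := by
      rw [st, st, hdig, List.reverse_cons, List.foldl_append]
      rfl
    simp [pst, pdlt, hst, hn0, ha]
    omega

noncomputable def cnt (k : ℕ) (dlt : Q → ℕ → Q) (q0 : Q) (m : ℕ) (x : Q × Bool) : ℕ :=
  ((Finset.range (k^m)).filter (fun n => pst k dlt q0 n = x)).card

lemma cnt_succ {k : ℕ} (hk : 2 ≤ k) (dlt : Q → ℕ → Q) (q0 : Q) (m : ℕ) (y : Q × Bool) :
    cnt k dlt q0 (m+1) y
      = ∑ x : Q × Bool,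
          (((Finset.range k).filter (fun d => pdlt dlt x d = y)).card) * cnt k dlt q0 m x := by
  have hk0 : 0 < k := by omega
  -- step 1 : biUnion decomposition
  have hset : (Finset.range (k^(m+1))).filter (fun n => pst k dlt q0 n = y)
      = (Finset.range (k^m)).biUnion (fun a =>
          (((Finset.range k).filter (fun d => pdlt dlt (pst k dlt q0 a) d = y)).image
            (fun d => k*a + d))) := by
    ext n
    simp only [Finset.mem_filter, Finset.mem_range, Finset.mem_biUnion, Finset.mem_image]
    constructor
    · rintro ⟨hn, hpst⟩
      refine ⟨n / k, ?_, n % k, ?_, ?_⟩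
      · rw [Nat.div_lt_iff_lt_mul hk0, ← pow_succ]
        exact hn
      · refine ⟨Nat.mod_lt n hk0, ?_⟩
        rw [← pst_rec hk dlt q0 (n/k) (n%k) (Nat.mod_lt n hk0), Nat.div_add_mod n k]
        exact hpst
      · exact Nat.div_add_mod n k
    · rintro ⟨a, haR, d, hd, rfl⟩
      constructor
      · calc k*a + d < k*a + k := by omega
          _ = k * (a+1) := by ring
          _ ≤ k * k^m := Nat.mul_le_mul_left k haR
          _ = k^(m+1) := by rw [pow_succ, mul_comm]
      · rw [pst_rec hk dlt q0 a d hd.1]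
        exact hd.2
  have hdisj : ∀ a ∈ Finset.range (k^m), ∀ b ∈ Finset.range (k^m), a ≠ b →
      Disjoint
        (((Finset.range k).filter (fun d => pdlt dlt (pst k dlt q0 a) d = y)).image (fun d => k*a + d))
        (((Finset.range k).filter (fun d => pdlt dlt (pst k dlt q0 b) d = y)).image (fun d => k*b + d)) := by
    intro a _ b _ hab
    rw [Finset.disjoint_left]
    rintro n hna hnb
    obtain ⟨d, hd, rfl⟩ := Finset.mem_image.mp hna
    obtain ⟨d', hd', heq⟩ := Finset.mem_image.mp hnb
    rw [Finset.mem_filter, Finset.mem_range] at hd hd'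
    apply hab
    have h1 : (k*a+d) / k = a := by
      rw [Nat.mul_add_div hk0, Nat.div_eq_of_lt hd.1, add_zero]
    have h2 : (k*b+d') / k = b := by
      rw [Nat.mul_add_div hk0, Nat.div_eq_of_lt hd'.1, add_zero]
    rw [← h1, ← h2, heq]
  have hcard : cnt k dlt q0 (m+1) y
      = ∑ a ∈ Finset.range (k^m),
          ((Finset.range k).filter (fun d => pdlt dlt (pst k dlt q0 a) d = y)).card := by
    rw [cnt, hset, Finset.card_biUnion hdisj]
    refine Finset.sum_congr rfl fun a _ => ?_
    rw [Finset.card_image_of_injective _ (fun d d' h => by omega)]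
  -- step 2 : fiberwise
  rw [hcard]
  rw [← Finset.sum_fiberwise_of_maps_to (t := Finset.univ)
    (fun a _ => Finset.mem_univ (pst k dlt q0 a))
    (fun a => ((Finset.range k).filter (fun d => pdlt dlt (pst k dlt q0 a) d = y)).card)]
  refine Finset.sum_congr rfl fun x _ => ?_
  have : ∀ a ∈ (Finset.range (k^m)).filter (fun a => pst k dlt q0 a = x),
      ((Finset.range k).filter (fun d => pdlt dlt (pst k dlt q0 a) d = y)).card
        = ((Finset.range k).filter (fun d => pdlt dlt x d = y)).card := by
    intro a ha
    rw [(Finset.mem_filter.mp ha).2]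
  rw [Finset.sum_congr rfl this, Finset.sum_const, cnt, smul_eq_mul, mul_comm]

variable {ι : Type} [Fintype ι] [DecidableEq ι]

lemma dot_sum_smul (phi v0 : ι → ℂ) (s : Finset ℕ) (c : ℕ → ℂ) (M : ℕ → Matrix ι ι ℂ) :
    ∑ i ∈ s, c i * (phi ⬝ᵥ (M i).mulVec v0) = phi ⬝ᵥ ((∑ i ∈ s, c i • M i).mulVec v0) := by
  induction s using Finset.induction_on with
  | empty => simp
  | @insert a s ha ih =>
    rw [Finset.sum_insert ha, Finset.sum_insert ha, ih, Matrix.add_mulVec,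
      dotProduct_add, Matrix.smul_mulVec, dotProduct_smul, smul_eq_mul]

/-- the sequence m ↦ φ ⬝ᵥ (A^m v₀) is annihilated by `charpoly A` acting via shift. -/
lemma charpoly_ann (A : Matrix ι ι ℂ) (phi v0 : ι → ℂ) :
    (aeval shift A.charpoly) (fun m => phi ⬝ᵥ ((A^m).mulVec v0)) = 0 := by
  funext m
  rw [aeval_shift_apply]
  have h1 : ∀ i, phi ⬝ᵥ ((A^(m+i)).mulVec v0) = phi ⬝ᵥ ((A^i * A^m).mulVec v0) := by
    intro i
    rw [← pow_add, add_comm]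
  simp only [h1]
  rw [dot_sum_smul]
  have h2 : (∑ i ∈ Finset.range (A.charpoly.natDegree + 1), A.charpoly.coeff i • A^i)
      = aeval A A.charpoly := (Polynomial.aeval_eq_sum_range A).symm
  have h3 : (∑ i ∈ Finset.range (A.charpoly.natDegree + 1), A.charpoly.coeff i • (A^i * A^m))
      = (∑ i ∈ Finset.range (A.charpoly.natDegree + 1), A.charpoly.coeff i • A^i) * A^m := by
    rw [Finset.sum_mul]
    refine Finset.sum_congr rfl fun i _ => ?_
    rw [smul_mul_assoc]
  rw [h3, h2, Matrix.aeval_self_charpoly, zero_mul, Matrix.zero_mulVec, dotProduct_zero]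
  rfl

/-- root scaling for the shift recurrence. -/
lemma scale_roots (k : ℂ) (hk : k ≠ 0) (R : Multiset ℂ) (u w : ℕ → ℂ)
    (hw : ∀ m, w m = k^m * u m) :
    ∀ m, k^(m + Multiset.card R) *
        ((aeval shift ((R.map (fun r => X - C (r/k))).prod)) u m)
      = (aeval shift ((R.map (fun r => X - C r)).prod)) w m := by
  induction R using Multiset.induction_on with
  | empty =>
    intro m
    simp only [Multiset.map_zero, Multiset.prod_zero, _root_.map_one, Module.End.one_apply,
      Multiset.card_zero, add_zero]
    exact (hw m).symm
  | @cons a R ih =>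
    intro m
    simp only [Multiset.map_cons, Multiset.prod_cons, _root_.map_mul, Module.End.mul_apply,
      Multiset.card_cons]
    set F := (aeval shift ((R.map (fun r => X - C (r/k))).prod)) u with hF
    set G := (aeval shift ((R.map (fun r => X - C r)).prod)) w with hG
    have hXa : ∀ (b : ℂ) (v : ℕ → ℂ) (n : ℕ), (aeval shift (X - C b)) v n = v (n+1) - b * v n := by
      intro b v n
      rw [_root_.map_sub, LinearMap.sub_apply]
      simp [shift, Polynomial.aeval_X, Polynomial.aeval_C, Module.algebraMap_end_apply]
    rw [hXa, hXa]
    rw [← ih (m+1), ← ih m]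
    have h5 : m + (Multiset.card R + 1) = (m + 1) + Multiset.card R := by ring
    rw [h5]
    field_simp
    ring
  

noncomputable def trmat (k : ℕ) (dlt : Q → ℕ → Q) : Matrix (Q × Bool) (Q × Bool) ℂ :=
  fun y x => (((Finset.range k).filter (fun d => pdlt dlt x d = y)).card : ℂ)

noncomputable def cvec (k : ℕ) (dlt : Q → ℕ → Q) (q0 : Q) (m : ℕ) : (Q × Bool) → ℂ :=
  fun x => (cnt k dlt q0 m x : ℂ)

lemma cvec_succ {k : ℕ} (hk : 2 ≤ k) (dlt : Q → ℕ → Q) (q0 : Q) (m : ℕ) :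
    cvec k dlt q0 (m+1) = (trmat k dlt).mulVec (cvec k dlt q0 m) := by
  funext y
  show ((cnt k dlt q0 (m+1) y : ℕ) : ℂ) = _
  rw [Matrix.mulVec, dotProduct, cnt_succ hk dlt q0 m y]
  push_cast
  refine Finset.sum_congr rfl fun x _ => rfl

lemma cvec_pow {k : ℕ} (hk : 2 ≤ k) (dlt : Q → ℕ → Q) (q0 : Q) (m : ℕ) :
    cvec k dlt q0 m = ((trmat k dlt)^m).mulVec (cvec k dlt q0 0) := by
  induction m with
  | zero => rw [pow_zero, Matrix.one_mulVec]
  | succ m ih => rw [cvec_succ hk dlt q0 m, ih, Matrix.mulVec_mulVec, ← pow_succ']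

lemma list_diff_bound (L : List (ℂ × ℂ)) (h1 : ∀ pr ∈ L, Complex.abs pr.1 = 1)
    (n τ : ℕ) (δ : ℝ) (hδ : 0 ≤ δ) (hτ : ∀ pr ∈ L, Complex.abs (pr.1^τ - 1) ≤ δ) :
    Complex.abs ((L.map fun pr => pr.2 * pr.1^n).sum - (L.map fun pr => pr.2 * pr.1^(n+τ)).sum)
      ≤ (L.map fun pr => Complex.abs pr.2).sum * δ := by
  induction L with
  | nil => simpa using hδ
  | cons pr L ih =>
    simp only [List.map_cons, List.sum_cons]
    have hhead : Complex.abs ((pr.2 * pr.1^n) - (pr.2 * pr.1^(n+τ)))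
        ≤ Complex.abs pr.2 * δ := by
      have he : pr.2 * pr.1^n - pr.2 * pr.1^(n+τ) = pr.2 * pr.1^n * (1 - pr.1^τ) := by
        rw [pow_add]; ring
      rw [he, _root_.map_mul, _root_.map_mul, _root_.map_pow,
        h1 pr (List.mem_cons_self), one_pow, mul_one, AbsoluteValue.map_sub]
      exact mul_le_mul_of_nonneg_left (hτ pr (List.mem_cons_self))
        (AbsoluteValue.nonneg _ _)
    have hIH := ih (fun q hq => h1 q (List.mem_cons_of_mem _ hq))
      (fun q hq => hτ q (List.mem_cons_of_mem _ hq))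
    have hsplit : pr.2 * pr.1^n + (L.map fun pr => pr.2 * pr.1^n).sum
        - (pr.2 * pr.1^(n+τ) + (L.map fun pr => pr.2 * pr.1^(n+τ)).sum)
        = (pr.2 * pr.1^n - pr.2 * pr.1^(n+τ))
          + ((L.map fun pr => pr.2 * pr.1^n).sum - (L.map fun pr => pr.2 * pr.1^(n+τ)).sum) := by
      ring
    rw [hsplit]
    calc Complex.abs _ ≤ Complex.abs (pr.2 * pr.1^n - pr.2 * pr.1^(n+τ))
          + Complex.abs ((L.map fun pr => pr.2 * pr.1^n).sum
            - (L.map fun pr => pr.2 * pr.1^(n+τ)).sum) := Complex.abs.add_le _ _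
      _ ≤ Complex.abs pr.2 * δ + (L.map fun pr => Complex.abs pr.2).sum * δ :=
          add_le_add hhead hIH
      _ = (Complex.abs pr.2 + (L.map fun pr => Complex.abs pr.2).sum) * δ := by ring

set_option maxHeartbeats 1000000 in
theorem key (k : ℕ) (hk : 2 ≤ k) (T : Set ℕ)
    (Q : Type) [Fintype Q] [DecidableEq Q] (q0 : Q) (dlt : Q → ℕ → Q) (acc : Q → Bool)
    (hmem : ∀ n, n ∈ T ↔ acc (st k dlt q0 n) = true)
    (hfreq : ∀ ε : ℝ, 0 < ε → ∀ M : ℕ, ∃ N, M ≤ N ∧ 1 ≤ N ∧ (piCount T N : ℝ) < ε * N) :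
    Tendsto (fun N : ℕ => (piCount T N : ℝ) / N) atTop (nhds 0) := by
  have hk1 : 1 < k := by omega
  have hk0 : (0:ℝ) < (k:ℝ) := by exact_mod_cast (by omega : 0 < k)
  -- counting identity
  have hcard : ∀ m : ℕ, piCount T (k^m)
      = ∑ x ∈ Finset.univ.filter (fun x : Q × Bool => acc x.1 = true), cnt k dlt q0 m x := by
    intro m
    rw [piCount_eq_card_of_iff T (k^m) (fun n => acc (st k dlt q0 n) = true) hmem]
    rw [Finset.card_eq_sum_card_fiberwise (f := pst k dlt q0)
      (t := Finset.univ.filter (fun x : Q × Bool => acc x.1 = true))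
      (fun n hn => by
        rw [Finset.mem_coe, Finset.mem_filter]
        exact ⟨Finset.mem_univ _, (Finset.mem_filter.mp hn).2⟩)]
    refine Finset.sum_congr rfl fun x hx => ?_
    rw [cnt]
    congr 1
    ext n
    simp only [Finset.mem_filter, Finset.mem_range]
    constructor
    · rintro ⟨⟨hn, -⟩, hp⟩; exact ⟨hn, hp⟩
    · rintro ⟨hn, hp⟩
      refine ⟨⟨hn, ?_⟩, hp⟩
      have : (pst k dlt q0 n).1 = st k dlt q0 n := rfl
      rw [← this, hp]
      exact (Finset.mem_filter.mp hx).2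
  -- sequences
  set ur : ℕ → ℝ := fun m => (piCount T (k^m) : ℝ) / (k:ℝ)^m with hurdef
  set u : ℕ → ℂ := fun m => ((ur m : ℝ) : ℂ) with hudef
  set w : ℕ → ℂ := fun m => ((piCount T (k^m) : ℕ) : ℂ) with hwdef
  have hur0 : ∀ m, 0 ≤ ur m := fun m => div_nonneg (Nat.cast_nonneg _) (by positivity)
  have hur1 : ∀ m, ur m ≤ 1 := by
    intro m
    rw [hurdef]
    rw [div_le_one (by positivity)]
    have := piCount_le T (k^m)
    exact_mod_cast this
  have hw : ∀ m, w m = (k:ℂ)^m * u m := by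
    intro m
    have hkm : ((k:ℂ))^m ≠ 0 := by
      apply pow_ne_zero
      simp only [ne_eq, Nat.cast_eq_zero]
      omega
    rw [hwdef, hudef, hurdef]
    push_cast
    field_simp
  -- matrix representation
  set A := trmat (Q := Q) k dlt with hA
  set phi : Q × Bool → ℂ := fun x => if acc x.1 = true then (1:ℂ) else 0 with hphi
  set v0 := cvec k dlt q0 0 with hv0
  have hwm : ∀ m, w m = dotProduct phi ((A^m).mulVec v0) := by
    intro m
    have hvm : cvec k dlt q0 m = (A^m).mulVec v0 := cvec_pow hk dlt q0 m
    have h1 : w m = ∑ x ∈ Finset.univ.filter (fun x : Q × Bool => acc x.1 = true),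
        ((cnt k dlt q0 m x : ℕ) : ℂ) := by
      show ((piCount T (k^m) : ℕ) : ℂ) = _
      rw [hcard m]
      push_cast
      rfl
    rw [h1, ← hvm, Finset.sum_filter, dotProduct]
    refine Finset.sum_congr rfl fun x _ => ?_
    by_cases hx : acc x.1 = true
    · simp [hphi, hx, cvec]
    · simp [hphi, hx, cvec]
  have hann : (aeval shift (A.charpoly)) w = 0 := by
    have : w = fun m => dotProduct phi ((A^m).mulVec v0) := funext hwm
    rw [this]
    exact charpoly_ann A phi v0
  -- roots
  set p := A.charpoly with hp
  have hmono : p.Monic := A.charpoly_monic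
  have hsp : p.Splits := IsAlgClosed.splits p
  have hfac : p = (p.roots.map (fun a => X - C a)).prod :=
    hsp.eq_prod_roots_of_monic hmono
  have hannR : (aeval shift ((p.roots.map (fun a => X - C a)).prod)) w = 0 := by
    rw [← hfac]; exact hann
  have hkC : ((k:ℂ)) ≠ 0 := by
    simp only [ne_eq, Nat.cast_eq_zero]
    omega
  have hannU : (aeval shift ((p.roots.map (fun r => X - C (r/(k:ℂ)))).prod)) u = 0 := by
    funext m
    have hs := scale_roots (k:ℂ) hkC p.roots u w hw m
    have hz : (aeval shift ((p.roots.map (fun a => X - C a)).prod)) w m = 0 := by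
      rw [hannR]; rfl
    rw [hz] at hs
    have hkpow : ((k:ℂ))^(m + Multiset.card p.roots) ≠ 0 := pow_ne_zero _ hkC
    have := mul_eq_zero.mp (by rw [hs] : ((k:ℂ))^(m + Multiset.card p.roots)
      * ((aeval shift ((p.roots.map (fun r => X - C (r/(k:ℂ)))).prod)) u m) = 0)
    rcases this with h | h
    · exact absurd h hkpow
    · exact h
  set Λ : Multiset ℂ := p.roots.map (fun r => r/(k:ℂ)) with hΛ
  have hannΛ : (aeval shift ((Λ.map (fun a => X - C a)).prod)) u = 0 := by
    rw [hΛ, Multiset.map_map]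
    exact hannU
  have hBdd : Bdd u := by
    refine ⟨1, fun m => ?_⟩
    rw [hudef]
    rw [Complex.abs_ofReal, abs_of_nonneg (hur0 m)]
    exact hur1 m
  have hfin : (aeval shift (∏ l ∈ Λ.toFinset, (X - C l)^(Λ.count l))) u = 0 := by
    rw [← Finset.prod_multiset_map_count]
    exact hannΛ
  obtain ⟨L, hL1, htend⟩ := decomp Λ.toFinset (fun l => Λ.count l) u hBdd hfin
  set g : ℕ → ℂ := fun n => (L.map fun pr => pr.2 * pr.1 ^ n).sum with hg
  -- windows
  have hwin : ∀ ε : ℝ, 0 < ε → ∀ W M₀ : ℕ, ∃ m, M₀ ≤ m ∧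
      ∀ r, r ≤ W → Complex.abs (u (m - r)) ≤ ε := by
    intro ε hε W M₀
    have hkW : (0:ℝ) < (k:ℝ)^(W+1) := by positivity
    set ε' := ε / (k:ℝ)^(W+1) with hε'def
    have hε' : 0 < ε' := div_pos hε hkW
    obtain ⟨N, hNM, hN1, hNlt⟩ := hfreq ε' hε' (k^(M₀+W))
    set m := Nat.log k N with hm
    have hmge : M₀ + W ≤ m := (Nat.le_log_iff_pow_le hk1 (by omega)).mpr hNM
    refine ⟨m, by omega, fun r hr => ?_⟩
    have hrm : r ≤ m := by omega
    have h2 : piCount T (k^(m-r)) ≤ piCount T N := by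
      apply piCount_mono
      calc k^(m-r) ≤ k^m := Nat.pow_le_pow_right (by omega) (by omega)
        _ ≤ N := Nat.pow_log_le_self k (by omega)
    have h3 : (N:ℝ) < (k:ℝ)^(m+1) := by
      exact_mod_cast Nat.lt_pow_succ_log_self hk1 N
    have h4 : (piCount T (k^(m-r)) : ℝ) < ε' * (k:ℝ)^(m+1) := by
      calc (piCount T (k^(m-r)) : ℝ) ≤ (piCount T N : ℝ) := by exact_mod_cast h2
        _ < ε' * N := hNlt
        _ ≤ ε' * (k:ℝ)^(m+1) := mul_le_mul_of_nonneg_left h3.le hε'.le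
    have hpow : (0:ℝ) < (k:ℝ)^(m-r) := by positivity
    have hexp : (k:ℝ)^(m+1) = (k:ℝ)^(m-r) * (k:ℝ)^(r+1) := by
      rw [← pow_add]
      congr 1
      omega
    have hub : ur (m-r) < ε' * (k:ℝ)^(r+1) := by
      rw [hurdef]
      rw [div_lt_iff₀ hpow]
      calc (piCount T (k^(m-r)) : ℝ) < ε' * (k:ℝ)^(m+1) := h4
        _ = ε' * (k:ℝ)^(r+1) * (k:ℝ)^(m-r) := by rw [hexp]; ring
    have hle : ε' * (k:ℝ)^(r+1) ≤ ε := by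
      have hk1R : (1:ℝ) ≤ (k:ℝ) := by exact_mod_cast (by omega : 1 ≤ k)
      have h5 : (k:ℝ)^(r+1) ≤ (k:ℝ)^(W+1) :=
        pow_le_pow_right₀ hk1R (by omega)
      calc ε' * (k:ℝ)^(r+1) ≤ ε' * (k:ℝ)^(W+1) := mul_le_mul_of_nonneg_left h5 hε'.le
        _ = ε := by rw [hε'def]; field_simp
    rw [hudef]
    rw [Complex.abs_ofReal, abs_of_nonneg (hur0 _)]
    linarith
  -- g vanishes
  have hg0 : ∀ n, g n = 0 := by
    intro n
    by_contra h0
    have habs : 0 < Complex.abs (g n) := by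
      simpa [AbsoluteValue.pos_iff] using h0
    have hclaim : ∀ ε : ℝ, 0 < ε → Complex.abs (g n) ≤ 3 * ε := by
      intro ε hε
      set Cs := (L.map fun pr => Complex.abs pr.2).sum with hCs
      have hCs0 : 0 ≤ Cs := by
        apply List.sum_nonneg
        intro x hx
        obtain ⟨q, -, rfl⟩ := List.mem_map.mp hx
        exact AbsoluteValue.nonneg _ _
      set δ := ε / (Cs + 1) with hδdef
      have hδ : 0 < δ := div_pos hε (by linarith)
      set l := L.map Prod.fst with hldef
      have hl : ∀ x ∈ l, Complex.abs x = 1 := by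
        intro x hx
        obtain ⟨q, hq, rfl⟩ := List.mem_map.mp hx
        exact hL1 q hq
      obtain ⟨R, hR⟩ := bohr_syndetic l hl δ hδ
      obtain ⟨M₁, hM₁⟩ := Metric.tendsto_atTop.mp htend ε hε
      obtain ⟨m, hm1, hm2⟩ := hwin ε hε R (M₁ + R + n + 1)
      obtain ⟨τ, hτ1, hτ2, hτ3⟩ := hR (m - R - n)
      set j := n + τ with hj
      have hjm : j ≤ m := by omega
      have hjmR : m - R ≤ j := by omega
      have hjM : M₁ ≤ j := by omega
      have hwinj : Complex.abs (u j) ≤ ε := by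
        have := hm2 (m - j) (by omega)
        have hmj : m - (m - j) = j := by omega
        rwa [hmj] at this
      have hdist : Complex.abs (u j - g j) ≤ ε := by
        have := hM₁ j hjM
        rw [Complex.dist_eq, sub_zero] at this
        exact this.le
      have hgj : Complex.abs (g j) ≤ 2 * ε := by
        have h6 : Complex.abs (g j) ≤ Complex.abs (u j) + Complex.abs (u j - g j) := by
          have h7 := Complex.abs.add_le (u j) (g j - u j)
          rw [show u j + (g j - u j) = g j from by ring] at h7
          rw [AbsoluteValue.map_sub] at h7
          exact h7
        linarith
      have hdiff : Complex.abs (g n - g j) ≤ Cs * δ := by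
        have := list_diff_bound L hL1 n τ δ hδ.le (fun pr hpr => by
          apply hτ3
          rw [hldef]
          exact List.mem_map.mpr ⟨pr, hpr, rfl⟩)
        have h8 : g n - g j = (L.map fun pr => pr.2 * pr.1^n).sum
            - (L.map fun pr => pr.2 * pr.1^(n+τ)).sum := by
          simp only [hg, hj]
        rw [h8]
        exact this
      have hfinal : Complex.abs (g n) ≤ Complex.abs (g j) + Complex.abs (g n - g j) := by
        have h7 := Complex.abs.add_le (g j) (g n - g j)
        rw [show g j + (g n - g j) = g n from by ring] at h7
        exact h7
      have hCsδ : Cs * δ ≤ ε := by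
        have : Cs * δ ≤ (Cs + 1) * δ := by nlinarith
        rw [hδdef] at this ⊢
        calc Cs * (ε / (Cs+1)) ≤ (Cs + 1) * (ε / (Cs+1)) := this
          _ = ε := by field_simp
      linarith
    have := hclaim (Complex.abs (g n) / 4) (by linarith)
    linarith
  -- u tends to 0
  have hu0 : Tendsto u atTop (nhds 0) := by
    have heq : (fun m => u m - g m) = u := by
      funext m
      rw [hg0 m, sub_zero]
    rw [← heq]
    exact htend
  have hurt : Tendsto ur atTop (nhds 0) := by
    have h8 : Tendsto (fun m => (u m).re) atTop (nhds ((0:ℂ).re)) :=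
      (Complex.continuous_re.tendsto 0).comp hu0
    simp only [Complex.zero_re] at h8
    have h9 : (fun m => (u m).re) = ur := by
      funext m
      rw [hudef]
      exact Complex.ofReal_re _
    rwa [h9] at h8
  -- final squeeze
  have hlog : Tendsto (fun N : ℕ => Nat.log k N) atTop atTop := by
    rw [Filter.tendsto_atTop_atTop]
    intro b
    refine ⟨k^b, fun N hN => ?_⟩
    have hN0 : N ≠ 0 := by
      have : 1 ≤ k^b := Nat.one_le_pow b k (by omega)
      omega
    exact (Nat.le_log_iff_pow_le hk1 hN0).mpr hN
  have hcomp : Tendsto (fun N : ℕ => (k:ℝ) * ur (Nat.log k N + 1)) atTop (nhds 0) := by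
    have h10 : Tendsto (fun N : ℕ => Nat.log k N + 1) atTop atTop :=
      tendsto_atTop_mono (fun N => Nat.le_succ _) hlog
    have h11 : Tendsto (fun N : ℕ => ur (Nat.log k N + 1)) atTop (nhds 0) :=
      hurt.comp h10
    have := h11.const_mul (k:ℝ)
    simpa using this
  apply squeeze_zero' (Filter.Eventually.of_forall fun N => div_nonneg (Nat.cast_nonneg _) (Nat.cast_nonneg _))
    _ hcomp
  filter_upwards [eventually_ge_atTop 1] with N hN
  set m := Nat.log k N with hm
  have hNpos : (0:ℝ) < N := by exact_mod_cast hN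
  have hkm : (0:ℝ) < (k:ℝ)^m := by positivity
  have h12 : piCount T N ≤ piCount T (k^(m+1)) :=
    piCount_mono T (Nat.lt_pow_succ_log_self hk1 N).le
  have h13 : (k:ℝ)^m ≤ (N:ℝ) := by
    exact_mod_cast Nat.pow_log_le_self k (by omega)
  calc (piCount T N : ℝ) / N ≤ (piCount T (k^(m+1)) : ℝ) / N := by
        apply (div_le_div_iff_of_pos_right hNpos).mpr
        exact_mod_cast h12
    _ ≤ (piCount T (k^(m+1)) : ℝ) / (k:ℝ)^m := by
        apply div_le_div_of_nonneg_left (Nat.cast_nonneg _) hkm h13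
    _ = (k:ℝ) * ur (m+1) := by
        rw [hurdef]
        rw [pow_succ]
        field_simp
        ring

end AutoAux

end AuxDev

set_option maxHeartbeats 1000000 in
theorem limsup_one_imp_liminf_one
    (k : ℕ) (hk : 2 ≤ k) (S : Set ℕ) (hS : IsAutomaticSet k S)
    (h1 : Filter.atTop.limsup (fun N : ℕ => (piCount S N : ℝ) / N) = 1) :
    Filter.atTop.liminf (fun N : ℕ => (piCount S N : ℝ) / N) = 1 := by
  obtain ⟨Q, fQ, q0, dlt, tau, hmach⟩ := hS
  letI := fQ
  letI : DecidableEq Q := Classical.decEq Q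
  have hmem : ∀ n, n ∈ Sᶜ ↔ (fun q => decide (tau q = 0)) (AutoAux.st k dlt q0 n) = true := by
    intro n
    have h := hmach n
    by_cases hn : n ∈ S
    · simp only [Set.indicator_of_mem hn] at h
      simp only [Set.mem_compl_iff, hn, not_true_eq_false, false_iff]
      rw [AutoAux.st, ← h]
      simp
    · simp only [Set.indicator_of_notMem hn] at h
      simp only [Set.mem_compl_iff, hn, not_false_eq_true, true_iff]
      rw [AutoAux.st, ← h]
      simp
  have hfreqS : ∀ ε : ℝ, 0 < ε → ∃ᶠ N in atTop, 1 - ε < (piCount S N : ℝ)/N := by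
    intro ε hε
    by_contra hcon
    rw [Filter.not_frequently] at hcon
    have hev : ∀ᶠ N in atTop, (piCount S N : ℝ)/N ≤ 1 - ε :=
      hcon.mono fun N h => not_lt.mp h
    have hbd : IsBoundedUnder (· ≥ ·) atTop (fun N : ℕ => (piCount S N : ℝ)/N) :=
      Filter.isBoundedUnder_of ⟨0, fun N =>
        div_nonneg (Nat.cast_nonneg _) (Nat.cast_nonneg _)⟩
    have hcb : IsCoboundedUnder (· ≤ ·) atTop (fun N : ℕ => (piCount S N : ℝ)/N) :=
      hbd.isCoboundedUnder_le
    have hle := Filter.limsup_le_of_le hcb hev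
    rw [h1] at hle
    linarith
  have hfreq : ∀ ε : ℝ, 0 < ε → ∀ M : ℕ, ∃ N, M ≤ N ∧ 1 ≤ N ∧ (piCount Sᶜ N : ℝ) < ε * N := by
    intro ε hε M
    obtain ⟨N, hNM, hNP⟩ := Filter.frequently_atTop.mp (hfreqS ε hε) (max M 1)
    refine ⟨N, le_trans (le_max_left M 1) hNM, le_trans (le_max_right M 1) hNM, ?_⟩
    have hN1 : 1 ≤ N := le_trans (le_max_right M 1) hNM
    have hN0 : (0:ℝ) < N := by exact_mod_cast hN1
    have hc : (piCount S N : ℝ) + (piCount Sᶜ N : ℝ) = N := by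
      exact_mod_cast AutoAux.piCount_add_compl S N
    have h5 : (1-ε) * N < (piCount S N : ℝ) := (lt_div_iff₀ hN0).mp hNP
    have h6 : (1-ε) * N = N - ε * N := by ring
    linarith
  have hT0 := AutoAux.key k hk Sᶜ Q q0 dlt (fun q => decide (tau q = 0)) hmem hfreq
  have hev : (fun N : ℕ => 1 - (piCount Sᶜ N : ℝ)/N) =ᶠ[atTop]
      (fun N : ℕ => (piCount S N : ℝ)/N) := by
    filter_upwards [eventually_ge_atTop 1] with N hN
    have hN0 : (0:ℝ) < N := by exact_mod_cast hN
    have hc : (piCount S N : ℝ) + (piCount Sᶜ N : ℝ) = N := by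
      exact_mod_cast AutoAux.piCount_add_compl S N
    field_simp
    linarith
  have hft : Tendsto (fun N : ℕ => (piCount S N : ℝ)/N) atTop (nhds 1) := by
    have h2 : Tendsto (fun N : ℕ => 1 - (piCount Sᶜ N : ℝ)/N) atTop (nhds (1 - 0)) :=
      tendsto_const_nhds.sub hT0
    rw [sub_zero] at h2
    exact h2.congr' hev
  exact hft.liminf_eq
end

section
/- Let k ≥ 2 be a natural number and let S be the set of natural numbers whose base-k expansion has even length (where 0, having the empty expansion, belongs to S). Then the lower density of S equals 1/(k+1) and the upper density of S equals k/(k+1). -/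
open Filter

def Fcnt (k N : ℕ) : ℕ :=
  ((Finset.range N).filter (fun n => (Nat.digits k n).length % 2 = 0)).card

lemma Fcnt_succ (k N : ℕ) :
    Fcnt k (N+1) = Fcnt k N + if (Nat.digits k N).length % 2 = 0 then 1 else 0 := by
  unfold Fcnt
  rw [Finset.range_add_one, Finset.filter_insert]
  by_cases h : (Nat.digits k N).length % 2 = 0
  · rw [if_pos h, if_pos h, Finset.card_insert_of_notMem (by simp)]
  · rw [if_neg h, if_neg h, Nat.add_zero]

lemma Fcnt_one (k : ℕ) : Fcnt k 1 = 1 := by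
  unfold Fcnt
  rw [show Finset.range 1 = {0} from rfl]
  simp [Finset.filter_singleton]
lemma Fcnt_formula (k : ℕ) (hk : 2 ≤ k) (N : ℕ) (hN : 1 ≤ N) :
    (Nat.log k N % 2 = 0 → (k+1) * Fcnt k N = k ^ (Nat.log k N + 1) + 1) ∧
    (Nat.log k N % 2 = 1 → (k+1) * Fcnt k N + k ^ (Nat.log k N + 1) = (k+1) * N + 1) := by
  have hk1 : 1 < k := hk
  induction N, hN using Nat.le_induction with
  | base =>
      rw [Nat.log_one_right, Fcnt_one]
      constructor
      · intro _; simp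
      · intro h; omega
  | succ N hN IH =>
      set L := Nat.log k N with hL
      have hlow : k ^ L ≤ N := Nat.pow_log_le_self k (by omega)
      have hhigh : N < k ^ (L+1) := Nat.lt_pow_succ_log_self hk1 N
      have hlen : (Nat.digits k N).length = L + 1 := Nat.digits_len k N hk1 (by omega)
      have hstep := Fcnt_succ k N
      rw [hlen] at hstep
      by_cases hroll : N + 1 = k ^ (L+1)
      · have hlog : Nat.log k (N+1) = L + 1 := by rw [hroll, Nat.log_pow hk1]
        have hpow : k ^ (L+1+1) = k ^ (L+1) * k := pow_succ k (L+1)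
        rcases Nat.mod_two_eq_zero_or_one L with hpar | hpar
        · -- L even, rollover, new log L+1 odd
          have hF : Fcnt k (N+1) = Fcnt k N := by rw [hstep]; simp [hpar]; omega
          have hIH := IH.1 hpar
          constructor
          · intro h; rw [hlog] at h; omega
          · intro _
            rw [hlog, hF, hpow, hroll]
            nlinarith [hIH]
        · -- L odd, rollover, new log L+1 even
          have hF : Fcnt k (N+1) = Fcnt k N + 1 := by rw [hstep]; simp [Nat.succ_mod_two_eq_zero_iff, hpar]
          have hIH := IH.2 hpar
          constructor
          · intro _
            rw [hlog, hF, hpow, ← hroll]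
            nlinarith [hIH]
          · intro h; rw [hlog] at h; omega
      · have hle : N + 1 ≤ k ^ (L+1) := hhigh
        have hlt : N + 1 < k ^ (L+1) := by omega
        have hlog : Nat.log k (N+1) = L :=
          Nat.log_eq_of_pow_le_of_lt_pow (by omega) hlt
        rcases Nat.mod_two_eq_zero_or_one L with hpar | hpar
        · have hF : Fcnt k (N+1) = Fcnt k N := by rw [hstep]; simp [hpar]; omega
          have hIH := IH.1 hpar
          constructor
          · intro _; rw [hlog, hF]; exact hIH
          · intro h; rw [hlog] at h; omega
        · have hF : Fcnt k (N+1) = Fcnt k N + 1 := by rw [hstep]; simp [Nat.succ_mod_two_eq_zero_iff, hpar]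
          have hIH := IH.2 hpar
          constructor
          · intro h; rw [hlog] at h; omega
          · intro _
            rw [hlog, hF]
            nlinarith [hIH]

lemma Fcnt_lower (k : ℕ) (hk : 2 ≤ k) (N : ℕ) : N ≤ (k+1) * Fcnt k N := by
  rcases Nat.eq_zero_or_pos N with h0 | h0
  · simp [h0]
  have hk1 : 1 < k := hk
  have hlow : k ^ Nat.log k N ≤ N := Nat.pow_log_le_self k (by omega)
  have hhigh : N < k ^ (Nat.log k N + 1) := Nat.lt_pow_succ_log_self hk1 N
  have hpow : k ^ (Nat.log k N + 1) = k * k ^ (Nat.log k N) := by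
    rw [pow_succ]; ring
  rcases Nat.mod_two_eq_zero_or_one (Nat.log k N) with hpar | hpar
  · have := (Fcnt_formula k hk N h0).1 hpar
    omega
  · have := (Fcnt_formula k hk N h0).2 hpar
    nlinarith

lemma Fcnt_upper (k : ℕ) (hk : 2 ≤ k) (N : ℕ) (hN : 1 ≤ N) :
    (k+1) * Fcnt k N ≤ k * N + 1 := by
  have hk1 : 1 < k := hk
  have hlow : k ^ Nat.log k N ≤ N := Nat.pow_log_le_self k (by omega)
  have hhigh : N < k ^ (Nat.log k N + 1) := Nat.lt_pow_succ_log_self hk1 N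
  have hpow : k ^ (Nat.log k N + 1) = k * k ^ (Nat.log k N) := by
    rw [pow_succ]; ring
  rcases Nat.mod_two_eq_zero_or_one (Nat.log k N) with hpar | hpar
  · have := (Fcnt_formula k hk N hN).1 hpar
    nlinarith
  · have := (Fcnt_formula k hk N hN).2 hpar
    nlinarith

lemma Fcnt_odd_pow (k : ℕ) (hk : 2 ≤ k) (m : ℕ) :
    (k+1) * Fcnt k (k ^ (2*m+1)) = k ^ (2*m+1) + 1 := by
  have hk1 : 1 < k := hk
  have hpos : 1 ≤ k ^ (2*m+1) := Nat.one_le_pow _ _ (by omega)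
  have hlog : Nat.log k (k ^ (2*m+1)) = 2*m+1 := Nat.log_pow hk1 _
  have h := (Fcnt_formula k hk (k ^ (2*m+1)) hpos).2 (by rw [hlog]; omega)
  rw [hlog] at h
  have hpow : k ^ (2*m+1+1) = k * k ^ (2*m+1) := by rw [pow_succ]; ring
  nlinarith

lemma Fcnt_even_pow (k : ℕ) (hk : 2 ≤ k) (m : ℕ) :
    (k+1) * Fcnt k (k ^ (2*(m+1))) = k * k ^ (2*(m+1)) + 1 := by
  have hk1 : 1 < k := hk
  have hpos : 1 ≤ k ^ (2*(m+1)) := Nat.one_le_pow _ _ (by omega)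
  have hlog : Nat.log k (k ^ (2*(m+1))) = 2*(m+1) := Nat.log_pow hk1 _
  have h := (Fcnt_formula k hk (k ^ (2*(m+1))) hpos).1 (by rw [hlog]; omega)
  rw [hlog] at h
  have hpow : k ^ (2*(m+1)+1) = k * k ^ (2*(m+1)) := by rw [pow_succ]; ring
  omega

lemma Fcnt_le (k N : ℕ) : Fcnt k N ≤ N := by
  calc Fcnt k N ≤ (Finset.range N).card := Finset.card_filter_le _ _
  _ = N := Finset.card_range N

section Real

lemma u_lower (k : ℕ) (hk : 2 ≤ k) (N : ℕ) (hN : 1 ≤ N) :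
    1 / ((k:ℝ) + 1) ≤ (Fcnt k N : ℝ) / N := by
  have hkpos : (0:ℝ) < (k:ℝ) + 1 := by positivity
  have hNpos : (0:ℝ) < (N:ℝ) := by exact_mod_cast hN
  rw [div_le_div_iff₀ hkpos hNpos]
  have h : (N:ℝ) ≤ ((k:ℝ)+1) * (Fcnt k N : ℝ) := by
    exact_mod_cast Fcnt_lower k hk N
  nlinarith

lemma u_upper (k : ℕ) (hk : 2 ≤ k) (N : ℕ) (hN : 1 ≤ N) :
    (Fcnt k N : ℝ) / N ≤ (k:ℝ) / ((k:ℝ) + 1) + 1 / N := by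
  have hkpos : (0:ℝ) < (k:ℝ) + 1 := by positivity
  have hNpos : (0:ℝ) < (N:ℝ) := by exact_mod_cast hN
  have h : ((k:ℝ)+1) * (Fcnt k N : ℝ) ≤ (k:ℝ) * N + 1 := by
    exact_mod_cast Fcnt_upper k hk N hN
  rw [div_add_div _ _ (ne_of_gt hkpos) (ne_of_gt hNpos), div_le_div_iff₀ hNpos (by positivity)]
  nlinarith

lemma u_odd_pow (k : ℕ) (hk : 2 ≤ k) (m : ℕ) :
    (Fcnt k (k ^ (2*m+1)) : ℝ) / (k ^ (2*m+1) : ℕ) ≤ 1 / ((k:ℝ)+1) + 1 / ((k ^ (2*m+1) : ℕ) : ℝ) := by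
  have hkpos : (0:ℝ) < (k:ℝ) + 1 := by positivity
  have hP : (0:ℝ) < ((k ^ (2*m+1) : ℕ) : ℝ) := by
    have : 1 ≤ k ^ (2*m+1) := Nat.one_le_pow _ _ (by omega)
    exact_mod_cast this
  have h : ((k:ℝ)+1) * (Fcnt k (k ^ (2*m+1)) : ℝ) = ((k ^ (2*m+1) : ℕ) : ℝ) + 1 := by
    exact_mod_cast Fcnt_odd_pow k hk m
  rw [div_add_div _ _ (ne_of_gt hkpos) (ne_of_gt hP), div_le_div_iff₀ hP (by positivity)]
  nlinarith

lemma u_even_pow (k : ℕ) (hk : 2 ≤ k) (m : ℕ) :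
    (k:ℝ) / ((k:ℝ)+1) ≤ (Fcnt k (k ^ (2*(m+1))) : ℝ) / ((k ^ (2*(m+1)) : ℕ) : ℝ) := by
  have hkpos : (0:ℝ) < (k:ℝ) + 1 := by positivity
  have hP : (0:ℝ) < ((k ^ (2*(m+1)) : ℕ) : ℝ) := by
    have : 1 ≤ k ^ (2*(m+1)) := Nat.one_le_pow _ _ (by omega)
    exact_mod_cast this
  have h : ((k:ℝ)+1) * (Fcnt k (k ^ (2*(m+1))) : ℝ)
      = (k:ℝ) * ((k ^ (2*(m+1)) : ℕ) : ℝ) + 1 := by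
    exact_mod_cast Fcnt_even_pow k hk m
  rw [div_le_div_iff₀ hkpos hP]
  nlinarith

end Real

lemma piCount_eq (k N : ℕ) :
    piCount {n : ℕ | (Nat.digits k n).length % 2 = 0} N = Fcnt k N := by
  unfold piCount Fcnt
  rw [← Set.ncard_coe_finset]
  congr 1
  ext n
  simp [Set.mem_Iio, and_comm]

theorem densities_of_even_length_expansion_set
    (k : ℕ) (hk : 2 ≤ k)
    (S : Set ℕ) (hS : S = {n : ℕ | (Nat.digits k n).length % 2 = 0}) :
    Filter.atTop.liminf (fun N : ℕ => (piCount S N : ℝ) / N) = 1 / ((k : ℝ) + 1) ∧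
    Filter.atTop.limsup (fun N : ℕ => (piCount S N : ℝ) / N) = (k : ℝ) / ((k : ℝ) + 1) := by
  have hk1 : 1 < k := hk
  have hfun : (fun N : ℕ => (piCount S N : ℝ) / N) = fun N : ℕ => (Fcnt k N : ℝ) / N := by
    funext N
    rw [hS, piCount_eq]
  rw [hfun]
  set u := fun N : ℕ => (Fcnt k N : ℝ) / N with hu
  have hkpos : (0:ℝ) < (k:ℝ) + 1 := by positivity
  have hub : ∀ N, u N ≤ 1 := by
    intro N
    rcases Nat.eq_zero_or_pos N with h0 | h0
    · simp [hu, h0]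
    · have hNpos : (0:ℝ) < (N:ℝ) := by exact_mod_cast h0
      rw [hu]
      simp only
      rw [div_le_one hNpos]
      exact_mod_cast Fcnt_le k N
  have hlb : ∀ N, 0 ≤ u N := fun N => by positivity
  have hBddAbove : IsBoundedUnder (· ≤ ·) atTop u :=
    ⟨1, Filter.eventually_map.2 (Filter.Eventually.of_forall hub)⟩
  have hBddBelow : IsBoundedUnder (· ≥ ·) atTop u :=
    ⟨0, Filter.eventually_map.2 (Filter.Eventually.of_forall hlb)⟩
  have hpow_ge : ∀ m : ℕ, m ≤ k ^ m := fun m => le_of_lt (Nat.lt_pow_self (n := m) hk1)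
  have h1 : 1/((k:ℝ)+1) ≤ atTop.liminf u := by
    apply Filter.le_liminf_of_le hBddAbove.isCoboundedUnder_ge
    filter_upwards [eventually_ge_atTop 1] with N hN
    exact u_lower k hk N hN
  have h2 : atTop.liminf u ≤ 1/((k:ℝ)+1) := by
    apply le_of_forall_pos_le_add
    intro ε hε
    apply Filter.liminf_le_of_frequently_le _ hBddBelow
    rw [Filter.frequently_atTop]
    intro B
    obtain ⟨n0, hn0⟩ := exists_nat_ge (1/ε)
    set m := B + n0 with hm
    set P := k ^ (2*m+1) with hP
    have hmP : m ≤ P := le_trans (hpow_ge m) (Nat.pow_le_pow_right (by omega) (by omega))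
    have hPpos : (0:ℝ) < (P:ℝ) := by
      have : 1 ≤ P := Nat.one_le_pow _ _ (by omega)
      exact_mod_cast this
    refine ⟨P, by omega, ?_⟩
    have h := u_odd_pow k hk m
    have hn0P : (1:ℝ)/ε ≤ (P:ℝ) := by
      refine le_trans hn0 ?_
      exact_mod_cast (by omega : n0 ≤ P)
    have hrec : 1/(P:ℝ) ≤ ε := by
      rw [div_le_iff₀ hPpos]
      rw [div_le_iff₀ hε] at hn0P
      nlinarith
    calc u P ≤ 1/((k:ℝ)+1) + 1/(P:ℝ) := h
      _ ≤ 1/((k:ℝ)+1) + ε := by linarith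
  have h3 : atTop.limsup u ≤ (k:ℝ)/((k:ℝ)+1) := by
    apply le_of_forall_pos_le_add
    intro ε hε
    apply Filter.limsup_le_of_le hBddBelow.isCoboundedUnder_le
    obtain ⟨n0, hn0⟩ := exists_nat_ge (1/ε)
    filter_upwards [eventually_ge_atTop (max 1 n0)] with N hN
    have hN1 : 1 ≤ N := le_trans (le_max_left _ _) hN
    have hNpos : (0:ℝ) < (N:ℝ) := by exact_mod_cast hN1
    have hn0N : (1:ℝ)/ε ≤ (N:ℝ) := by
      refine le_trans hn0 ?_
      exact_mod_cast le_trans (le_max_right 1 n0) hN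
    have hrec : 1/(N:ℝ) ≤ ε := by
      rw [div_le_iff₀ hNpos]
      rw [div_le_iff₀ hε] at hn0N
      nlinarith
    calc u N ≤ (k:ℝ)/((k:ℝ)+1) + 1/(N:ℝ) := u_upper k hk N hN1
      _ ≤ (k:ℝ)/((k:ℝ)+1) + ε := by linarith
  have h4 : (k:ℝ)/((k:ℝ)+1) ≤ atTop.limsup u := by
    apply Filter.le_limsup_of_frequently_le _ hBddAbove
    rw [Filter.frequently_atTop]
    intro B
    refine ⟨k ^ (2*(B+1)), ?_, u_even_pow k hk B⟩
    exact le_trans (by omega) (le_trans (hpow_ge (2*(B+1))) (le_refl _))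
  exact ⟨le_antisymm h2 h1, le_antisymm h3 h4⟩
end

section
/- Let h : ℕ → {0,1} be defined by h(n) = 1 if n ≥ 1 and the most significant digit of the base-3 expansion of n equals 1, and h(n) = 0 otherwise (in particular h(0) = 0), and let s(n) = ∑_{j<n} h(j). Then limsup_{n→∞} s(n)/n = 3/4. -/
open Filter

lemma digits3_last_one : ∀ k j : ℕ, 3^k ≤ j → j < 2 * 3^k →
    (Nat.digits 3 j).getLast? = some 1 := by
  intro k
  induction k with
  | zero => intro j h1 h2; interval_cases j; simp [Nat.digits_def' (by norm_num : 1 < 3)]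
  | succ k ih =>
    intro j h1 h2
    have hj0 : 0 < j := lt_of_lt_of_le ((by positivity)) h1
    rw [Nat.digits_def' (by norm_num : 1 < 3) hj0]
    have hd1 : 3^k ≤ j / 3 := Nat.le_div_iff_mul_le (by norm_num) |>.2 (by rw [pow_succ] at h1; linarith)
    have hd2 : j / 3 < 2 * 3^k := by
      rw [Nat.div_lt_iff_lt_mul (by norm_num)]
      calc j < 2 * 3^(k+1) := h2
        _ = 2 * 3^k * 3 := by ring
    have := ih (j/3) hd1 hd2
    have hne : Nat.digits 3 (j/3) ≠ [] := Nat.digits_ne_nil_iff_ne_zero.2 (by have hp : 0 < 3^k := (by positivity); omega)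
    cases hd : Nat.digits 3 (j/3) with
    | nil => exact absurd hd hne
    | cons b l => rw [hd] at this; rw [List.getLast?_cons_cons]; exact this

lemma digits3_last_two : ∀ k j : ℕ, 2 * 3^k ≤ j → j < 3^(k+1) →
    (Nat.digits 3 j).getLast? = some 2 := by
  intro k
  induction k with
  | zero => intro j h1 h2; interval_cases j; simp [Nat.digits_def' (by norm_num : 1 < 3)]
  | succ k ih =>
    intro j h1 h2
    have hj0 : 0 < j := lt_of_lt_of_le (by positivity) h1
    rw [Nat.digits_def' (by norm_num : 1 < 3) hj0]
    have hd1 : 2 * 3^k ≤ j / 3 := Nat.le_div_iff_mul_le (by norm_num) |>.2 (by rw [pow_succ] at h1; linarith)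
    have hd2 : j / 3 < 3^(k+1) := by
      rw [Nat.div_lt_iff_lt_mul (by norm_num)]
      calc j < 3^(k+2) := h2
        _ = 3^(k+1) * 3 := by ring
    have := ih (j/3) hd1 hd2
    have hne : Nat.digits 3 (j/3) ≠ [] := Nat.digits_ne_nil_iff_ne_zero.2 (by have hp : 0 < 3^k := (by positivity); omega)
    cases hd : Nat.digits 3 (j/3) with
    | nil => exact absurd hd hne
    | cons b l => rw [hd] at this; rw [List.getLast?_cons_cons]; exact this

private def G (j : ℕ) : ℕ := if (Nat.digits 3 j).getLast? = some 1 then 1 else 0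

private lemma G_one {k j : ℕ} (h1 : 3^k ≤ j) (h2 : j < 2*3^k) : G j = 1 := by
  simp [G, digits3_last_one k j h1 h2]

private lemma G_zero {k j : ℕ} (h1 : 2*3^k ≤ j) (h2 : j < 3^(k+1)) : G j = 0 := by
  simp [G, digits3_last_two k j h1 h2]

private def SG (n : ℕ) : ℕ := ∑ j ∈ Finset.range n, G j

private lemma SG_split {a b : ℕ} (hab : a ≤ b) :
    SG b = SG a + ∑ j ∈ Finset.Ico a b, G j := by
  rw [SG, SG, Finset.range_eq_Ico,
    ← Finset.sum_Ico_consecutive _ (Nat.zero_le a) hab]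
  rw [Finset.range_eq_Ico]

private lemma SG_ones {k a b : ℕ} (ha : 3^k ≤ a) (hb : b ≤ 2*3^k) (hab : a ≤ b) :
    SG b = SG a + (b - a) := by
  rw [SG_split hab]
  congr 1
  rw [Finset.sum_congr rfl (fun j hj => ?_), Finset.sum_const, Nat.card_Ico, smul_eq_mul, mul_one]
  rw [Finset.mem_Ico] at hj
  exact G_one (le_trans ha hj.1) (lt_of_lt_of_le hj.2 hb)

private lemma SG_zeros {k a b : ℕ} (ha : 2*3^k ≤ a) (hb : b ≤ 3^(k+1)) (hab : a ≤ b) :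
    SG b = SG a := by
  rw [SG_split hab, Finset.sum_eq_zero (fun j hj => ?_), add_zero]
  rw [Finset.mem_Ico] at hj
  exact G_zero (le_trans ha hj.1) (lt_of_lt_of_le hj.2 hb)

private lemma SG_formula : ∀ k : ℕ, 2 * SG (3^k) + 1 = 3^k ∧ 2 * SG (2*3^k) + 1 = 3^(k+1) := by
  intro k
  induction k with
  | zero =>
    refine ⟨?_, ?_⟩
    · show 2 * SG 1 + 1 = 1
      rw [SG, Finset.sum_range_one]
      simp [G]
    · show 2 * SG 2 + 1 = 3
      rw [SG, Finset.sum_range_succ, Finset.sum_range_one]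
      simp [G, Nat.digits_def' (show (1:ℕ) < 3 by norm_num)]
  | succ k ih =>
    obtain ⟨ih1, ih2⟩ := ih
    have h1 : SG (3^(k+1)) = SG (2*3^k) :=
      SG_zeros (k := k) le_rfl le_rfl (by rw [pow_succ]; omega)
    have h2 : SG (2*3^(k+1)) = SG (3^(k+1)) + (2*3^(k+1) - 3^(k+1)) :=
      SG_ones (k := k+1) le_rfl le_rfl (by omega)
    constructor
    · rw [h1]; exact ih2
    · rw [h2, h1]
      have hp : 0 < 3^(k+1) := (by positivity)
      have : (3:ℕ)^(k+2) = 3 * 3^(k+1) := by ring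
      omega

private lemma SG_le (n : ℕ) : 4 * SG n ≤ 3 * n := by
  rcases Nat.eq_zero_or_pos n with rfl | hn
  · simp [SG]
  have hk1 : 3 ^ Nat.log 3 n ≤ n := Nat.pow_log_le_self 3 hn.ne'
  have hk2 : n < 3 ^ (Nat.log 3 n + 1) := Nat.lt_pow_succ_log_self (by norm_num) n
  set k := Nat.log 3 n with hk
  have hp : 0 < 3^k := (by positivity)
  obtain ⟨f1, f2⟩ := SG_formula k
  rcases le_or_gt n (2*3^k) with hcase | hcase
  · have := SG_ones (k := k) le_rfl hcase hk1
    have h3 : (3:ℕ)^(k+1) = 3 * 3^k := by ring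
    omega
  · have := SG_zeros (k := k) le_rfl hk2.le hcase.le
    have h3 : (3:ℕ)^(k+1) = 3 * 3^k := by ring
    omega

private lemma F_peak (k : ℕ) : ((SG (2*3^k) : ℝ)) / (2*3^k) = 3/4 - (1/4) * (1/3:ℝ)^k := by
  have h1 : 2 * SG (2*3^k) + 1 = 3^(k+1) := (SG_formula k).2
  have h1R : 2 * (SG (2*3^k) : ℝ) + 1 = 3^(k+1) := by exact_mod_cast congrArg (Nat.cast (R := ℝ)) h1
  have hp : (0:ℝ) < 3^k := by positivity
  rw [div_eq_iff (by positivity)]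
  have h3 : (1/3:ℝ)^k * 3^k = 1 := by
    rw [div_pow, one_pow, div_mul_cancel₀]
    positivity
  linear_combination h1R/2 + h3/2

private lemma F_tendsto :
    Filter.Tendsto (fun k : ℕ => ((SG (2*3^k) : ℝ)) / (2*3^k)) atTop (nhds (3/4)) := by
  simp_rw [F_peak]
  have h0 : Filter.Tendsto (fun k : ℕ => (1/3:ℝ)^k) atTop (nhds 0) :=
    tendsto_pow_atTop_nhds_zero_of_lt_one (by norm_num) (by norm_num)
  have h4 : Filter.Tendsto (fun k : ℕ => (3/4:ℝ) - (1/4) * (1/3)^k) atTop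
      (nhds ((3/4:ℝ) - (1/4) * 0)) := tendsto_const_nhds.sub (h0.const_mul (1/4))
  simpa using h4

theorem limsup_leading_ternary_digit_one
    (h : ℕ → ℕ)
    (hh : ∀ n : ℕ, h n = if (Nat.digits 3 n).getLast? = some 1 then 1 else 0)
    (s : ℕ → ℕ) (hs : ∀ n, s n = ∑ j ∈ Finset.range n, h j) :
    Filter.atTop.limsup (fun n : ℕ => (s n : ℝ) / n) = 3 / 4 := by
  have hsG : ∀ n, s n = SG n := by
    intro n
    rw [hs, SG]
    exact Finset.sum_congr rfl (fun j _ => by rw [hh]; rfl)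
  have hub : ∀ n : ℕ, (s n : ℝ) / n ≤ 3/4 := by
    intro n
    rcases Nat.eq_zero_or_pos n with rfl | hn
    · norm_num
    · rw [div_le_div_iff₀ (by exact_mod_cast hn) (by norm_num)]
      have h2 : (4 * s n : ℝ) ≤ 3 * n := by
        exact_mod_cast (hsG n ▸ SG_le n : 4 * s n ≤ 3 * n)
      linarith
  have hbdd : IsBoundedUnder (· ≤ ·) atTop (fun n : ℕ => (s n : ℝ) / n) :=
    Filter.isBoundedUnder_of ⟨3/4, hub⟩
  have hcob : IsCoboundedUnder (· ≤ ·) atTop (fun n : ℕ => (s n : ℝ) / n) :=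
    Filter.isCoboundedUnder_le_of_le atTop (x := 0) (fun n => by positivity)
  refine le_antisymm (Filter.limsup_le_of_le hcob (Eventually.of_forall hub)) ?_
  by_contra hlt
  push_neg at hlt
  obtain ⟨c, hc1, hc2⟩ := exists_between hlt
  have hfreq : ∃ᶠ n in atTop, c ≤ (s n : ℝ) / n := by
    rw [frequently_atTop]
    intro N
    have h1 : ∀ᶠ k in atTop, c ≤ ((SG (2*3^k) : ℝ)) / (2*3^k) :=
      F_tendsto.eventually (eventually_ge_nhds hc2)
    have h2 : ∀ᶠ k : ℕ in atTop, N ≤ 2*3^k := by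
      rw [eventually_atTop]
      exact ⟨N, fun k hk => le_trans (le_trans hk (show k < 3^k from Nat.lt_pow_self (by norm_num)).le) (by omega)⟩
    obtain ⟨k, hk1, hk2⟩ := (h1.and h2).exists
    exact ⟨2*3^k, hk2, by rw [hsG]; exact_mod_cast hk1⟩
  have := Filter.le_limsup_of_frequently_le hfreq hbdd
  exact absurd (lt_of_le_of_lt this hc1) (lt_irrefl c)
end

section
/- Let k ≥ 2 be a natural number and let A, B, C be integers with 1 ≤ A ≤ B < C. Let U₀ be the set of natural numbers whose base-k expansion has even length, U₁ the set of natural numbers whose base-k expansion has odd length, T₀ = {n ∈ ℕ : n mod C < A}, T₁ = {n ∈ ℕ : n mod C < B}, and let S = (U₀ ∩ T₀) ∪ (U₁ ∩ T₁). Then the lower density of S equals (kA + B)/((k+1)C) and the upper density of S equals (kB + A)/((k+1)C). -/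
open Filter

namespace DensityAux

def Fc (C w M : ℕ) : ℕ := w * (M / C) + min (M % C) w

lemma Fc_succ {C w : ℕ} (hw : w < C) (b : ℕ) :
    Fc C w (b + 1) = Fc C w b + (if b % C < w then 1 else 0) := by
  have hC : 0 < C := lt_of_le_of_lt (Nat.zero_le w) hw
  have hmod := Nat.mod_lt b hC
  have hd : b % C + (b / C) * C = b := Nat.mod_add_div' b C
  rcases Nat.lt_or_ge (b % C + 1) C with h | h
  · have e1 : b + 1 = (b % C + 1) + (b / C) * C := by omega
    have hdv : (b + 1) / C = b / C := by
      rw [e1, Nat.add_mul_div_right _ _ hC, Nat.div_eq_of_lt h, Nat.zero_add]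
    have hm : (b + 1) % C = b % C + 1 := by
      rw [e1, Nat.add_mul_mod_self_right, Nat.mod_eq_of_lt h]
    have hmin : min (b % C + 1) w = min (b % C) w + (if b % C < w then 1 else 0) := by
      split_ifs <;> omega
    simp only [Fc, hdv, hm, hmin]; ring
  · have hbc : b % C + 1 = C := by omega
    have e2 : (b / C + 1) * C = (b / C) * C + C := by ring
    have e1 : b + 1 = 0 + (b / C + 1) * C := by omega
    have hdv : (b + 1) / C = b / C + 1 := by
      rw [e1, Nat.add_mul_div_right _ _ hC, Nat.zero_div, Nat.zero_add]
    have hm : (b + 1) % C = 0 := by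
      rw [e1, Nat.add_mul_mod_self_right, Nat.zero_mod]
    have hif : (if b % C < w then (1:ℕ) else 0) = 0 := by rw [if_neg]; omega
    have hmin : min (b % C) w = w := by omega
    simp only [Fc, hdv, hm, hmin, hif, Nat.zero_min]
    ring

lemma Fc_count {C w : ℕ} (hw : w < C) (a : ℕ) : ∀ b, a ≤ b →
    ((Finset.Ico a b).filter (fun n => n % C < w)).card + Fc C w a = Fc C w b := by
  intro b hb
  induction b, hb using Nat.le_induction with
  | base => simp
  | succ b hb ih =>
    rw [Fc_succ hw, ← ih]
    rw [Nat.Ico_succ_right_eq_insert_Ico hb, Finset.filter_insert]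
    split_ifs
    · rw [Finset.card_insert_of_notMem (by simp [Finset.right_notMem_Ico])]
      omega
    · omega

lemma Fc_bound' (Cz w q r : ℤ) (h0w : 0 ≤ w) (h0q : 0 ≤ q) (h0r : 0 ≤ r)
    (hw : w ≤ Cz) (hrC : r < Cz) :
    w * (Cz * q + r) ≤ Cz * (w * q + min r w) ∧
      Cz * (w * q + min r w) ≤ w * (Cz * q + r) + w * Cz := by
  rcases le_total r w with h | h
  · rw [min_eq_left h]
    constructor <;> nlinarith [mul_nonneg (sub_nonneg.2 hw) h0r,
      mul_le_mul_of_nonneg_left h (sub_nonneg.2 hw), mul_nonneg h0w h0w]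
  · rw [min_eq_right h]
    constructor <;> nlinarith [mul_nonneg h0w (sub_nonneg.2 hrC.le),
      mul_nonneg h0w h0r]

lemma Fc_bound {C w : ℕ} (hw : w ≤ C) (M : ℕ) :
    (w * M : ℤ) ≤ C * Fc C w M ∧ (C * Fc C w M : ℤ) ≤ w * M + w * C := by
  rcases Nat.eq_zero_or_pos C with rfl | hC
  · have hw0 : w = 0 := le_antisymm hw (Nat.zero_le _)
    subst hw0; simp [Fc]
  obtain ⟨q, r, hd, hrC, hFc⟩ : ∃ q r, C * q + r = M ∧ r < C ∧ Fc C w M = w * q + min r w :=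
    ⟨M / C, M % C, Nat.div_add_mod M C, Nat.mod_lt M hC, rfl⟩
  have hb := Fc_bound' (C : ℤ) (w : ℤ) (q : ℤ) (r : ℤ)
    (by positivity) (by positivity) (by positivity)
    (by exact_mod_cast hw) (by exact_mod_cast hrC)
  have h1 : ((Fc C w M : ℕ) : ℤ) = (w : ℤ) * q + min (r : ℤ) (w : ℤ) := by
    rw [hFc]; push_cast [Nat.cast_min]; ring
  have h2 : (M : ℤ) = (C : ℤ) * q + r := by exact_mod_cast hd.symm
  rw [h1, h2]
  exact hb

lemma piCount_eq (S : Set ℕ) (N : ℕ) [DecidablePred (· ∈ S)] :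
    piCount S N = ((Finset.range N).filter (· ∈ S)).card := by
  rw [piCount, ← Set.ncard_coe_finset]
  congr 1
  ext n
  simp [Set.mem_Iio, and_comm]

lemma step_ineq (K Cz W0 W1 P0 P1 F0 F1 x E' : ℤ)
    (hK2 : 2 ≤ K) (hCp : 0 < Cz) (hW1p : 0 ≤ W1) (hW1C : W1 ≤ Cz)
    (hs : P1 + F0 = P0 + F1)
    (hb00 : W1 * x ≤ Cz * F0) (hb01 : Cz * F0 ≤ W1 * x + W1 * Cz)
    (hb10 : W1 * (x * K) ≤ Cz * F1) (hb11 : Cz * F1 ≤ W1 * (x * K) + W1 * Cz)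
    (ih : |(K + 1) * Cz * P0 - (K * W0 + W1) * x| ≤ E') :
    |(K + 1) * Cz * P1 - (K * W1 + W0) * (x * K)| ≤ E' + (K + 1) * Cz * Cz := by
  have hK0 : (0 : ℤ) ≤ K + 1 := by linarith
  have d1 : (K + 1) * Cz * P1 - (K * W1 + W0) * (x * K) =
      ((K + 1) * Cz * P0 - (K * W0 + W1) * x) +
      ((K + 1) * ((Cz * F1 - Cz * F0) - (W1 * (x * K) - W1 * x))) := by
    linear_combination (K + 1) * Cz * hs
  have hd2 : (Cz * F1 - Cz * F0) - (W1 * (x * K) - W1 * x) ≤ W1 * Cz := by linarith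
  have hd3 : -(W1 * Cz) ≤ (Cz * F1 - Cz * F0) - (W1 * (x * K) - W1 * x) := by linarith
  have hd2' := mul_le_mul_of_nonneg_left hd2 hK0
  have hd3' := mul_le_mul_of_nonneg_left hd3 hK0
  have hdE : (K + 1) * (W1 * Cz) ≤ (K + 1) * (Cz * Cz) :=
    mul_le_mul_of_nonneg_left (mul_le_mul_of_nonneg_right hW1C hCp.le) hK0
  rw [abs_le] at ih ⊢
  constructor <;> linarith [ih.1, ih.2]

lemma gen_ineq (K Az Bz Cz W0 W1 P0 P F0 F x Nz E' : ℤ)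
    (hK2 : 2 ≤ K) (hCp : 0 < Cz) (hAz : 1 ≤ Az) (hABz : Az ≤ Bz) (hBCz : Bz < Cz)
    (hW1p : 0 ≤ W1) (hW1C : W1 ≤ Cz)
    (hpar : (W0 = Az ∧ W1 = Bz) ∨ (W0 = Bz ∧ W1 = Az))
    (hxN : x ≤ Nz) (hNx : Nz ≤ x * K)
    (hs : P + F0 = P0 + F)
    (hb00 : W1 * x ≤ Cz * F0) (hb01 : Cz * F0 ≤ W1 * x + W1 * Cz)
    (hb10 : W1 * Nz ≤ Cz * F) (hb11 : Cz * F ≤ W1 * Nz + W1 * Cz)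
    (ih : |(K + 1) * Cz * P0 - (K * W0 + W1) * x| ≤ E') :
    (K * Az + Bz) * Nz - (E' + (K + 1) * Cz * Cz) ≤ (K + 1) * Cz * P ∧
      (K + 1) * Cz * P ≤ (K * Bz + Az) * Nz + (E' + (K + 1) * Cz * Cz) := by
  have hK0 : (0 : ℤ) ≤ K + 1 := by linarith
  have hK0' : (0 : ℤ) ≤ K := by linarith
  rw [abs_le] at ih
  have d1 : (K + 1) * Cz * P =
      ((K + 1) * Cz * P0 - (K * W0 + W1) * x) +
      ((K + 1) * ((Cz * F - Cz * F0) - W1 * (Nz - x))) +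
      ((K * W0 + W1) * x + (K + 1) * (W1 * (Nz - x))) := by
    linear_combination (K + 1) * Cz * hs
  have hd2 : (Cz * F - Cz * F0) - W1 * (Nz - x) ≤ W1 * Cz := by linarith
  have hd3 : -(W1 * Cz) ≤ (Cz * F - Cz * F0) - W1 * (Nz - x) := by linarith
  have hd2' := mul_le_mul_of_nonneg_left hd2 hK0
  have hd3' := mul_le_mul_of_nonneg_left hd3 hK0
  have hdE : (K + 1) * (W1 * Cz) ≤ (K + 1) * (Cz * Cz) :=
    mul_le_mul_of_nonneg_left (mul_le_mul_of_nonneg_right hW1C hCp.le) hK0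
  have h2 : x * (Bz - Az) ≤ Nz * (Bz - Az) :=
    mul_le_mul_of_nonneg_right hxN (by linarith)
  have h3 : K * (x * (Bz - Az)) ≤ K * (Nz * (Bz - Az)) :=
    mul_le_mul_of_nonneg_left h2 hK0'
  have h4 : Nz * (Bz - Az) ≤ (x * K) * (Bz - Az) :=
    mul_le_mul_of_nonneg_right hNx (by linarith)
  have hmain : (K * Az + Bz) * Nz ≤ (K * W0 + W1) * x + (K + 1) * (W1 * (Nz - x)) ∧
      (K * W0 + W1) * x + (K + 1) * (W1 * (Nz - x)) ≤ (K * Bz + Az) * Nz := by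
    rcases hpar with ⟨h0, h1⟩ | ⟨h0, h1⟩ <;> rw [h0, h1]
    · exact ⟨by linarith [h3], by linarith [h4]⟩
    · exact ⟨by linarith [h4], by linarith [h3]⟩
  constructor
  · linarith [hmain.1, ih.1, hd3', hdE, d1]
  · linarith [hmain.2, ih.2, hd2', hdE, d1]

lemma div_low {D N P X e : ℝ} (hD : 0 < D) (hN : 0 < N)
    (h : X * N - e ≤ D * P) : X / D - e / (D * N) ≤ P / N := by
  have key : X / D - e / (D * N) = (X * N - e) / (D * N) := by
    field_simp
  have key2 : P / N = (D * P) / (D * N) := (mul_div_mul_left P N (ne_of_gt hD)).symm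
  rw [key, key2]
  exact div_le_div_of_nonneg_right h (by positivity) |>.trans_eq rfl

lemma div_up {D N P X e : ℝ} (hD : 0 < D) (hN : 0 < N)
    (h : D * P ≤ X * N + e) : P / N ≤ X / D + e / (D * N) := by
  have key : X / D + e / (D * N) = (X * N + e) / (D * N) := by
    field_simp
  have key2 : P / N = (D * P) / (D * N) := (mul_div_mul_left P N (ne_of_gt hD)).symm
  rw [key, key2]
  exact div_le_div_of_nonneg_right h (by positivity) |>.trans_eq rfl

end DensityAux

set_option maxHeartbeats 2000000 in
theorem densities_of_constructed_set
    (k : ℕ) (hk : 2 ≤ k) (A B C : ℕ) (hA : 1 ≤ A) (hAB : A ≤ B) (hBC : B < C)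
    (U₀ U₁ T₀ T₁ S : Set ℕ)
    (hU₀ : U₀ = {n : ℕ | (Nat.digits k n).length % 2 = 0})
    (hU₁ : U₁ = {n : ℕ | (Nat.digits k n).length % 2 = 1})
    (hT₀ : T₀ = {n : ℕ | n % C < A})
    (hT₁ : T₁ = {n : ℕ | n % C < B})
    (hS : S = (U₀ ∩ T₀) ∪ (U₁ ∩ T₁)) :
    Filter.atTop.liminf (fun N : ℕ => (piCount S N : ℝ) / N) =
      ((k : ℝ) * A + B) / (((k : ℝ) + 1) * C) ∧
    Filter.atTop.limsup (fun N : ℕ => (piCount S N : ℝ) / N) =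
      ((k : ℝ) * B + A) / (((k : ℝ) + 1) * C) := by
  classical
  have hk1 : 1 < k := hk
  have hC : 0 < C := by omega
  set w : ℕ → ℕ := fun j => if j % 2 = 0 then A else B with hwdef
  have hwlt : ∀ j, w j < C := by intro j; simp only [hwdef]; split_ifs <;> omega
  have hwle : ∀ j, w j ≤ C := fun j => (hwlt j).le
  have hwp : ∀ j, w (j + 2) = w j := by
    intro j; simp only [hwdef, Nat.add_mod_right]
  have hmem : ∀ n, n ∈ S ↔ ((Nat.digits k n).length % 2 = 0 ∧ n % C < A) ∨
      ((Nat.digits k n).length % 2 = 1 ∧ n % C < B) := by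
    intro n; simp [hS, hU₀, hU₁, hT₀, hT₁]
  have hmem2 : ∀ L n, k ^ L ≤ n → n < k ^ (L + 1) → (n ∈ S ↔ n % C < w (L + 1)) := by
    intro L n h1 h2
    have hkL : 0 < k ^ L := pow_pos (by omega) L
    have hn0 : n ≠ 0 := by omega
    have hlen : (Nat.digits k n).length = L + 1 := by
      rw [Nat.digits_len k n hk1 hn0, Nat.log_eq_of_pow_le_of_lt_pow h1 h2]
    rw [hmem n, hlen]
    rcases Nat.mod_two_eq_zero_or_one (L + 1) with h | h <;>
      simp [hwdef, h] <;> omega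
  -- step lemma
  have hstep : ∀ L N, k ^ L ≤ N → N ≤ k ^ (L + 1) →
      piCount S N + DensityAux.Fc C (w (L + 1)) (k ^ L) =
        piCount S (k ^ L) + DensityAux.Fc C (w (L + 1)) N := by
    intro L N h1 h2
    rw [DensityAux.piCount_eq, DensityAux.piCount_eq]
    have hsplit : Finset.range N = Finset.range (k ^ L) ∪ Finset.Ico (k ^ L) N := by
      simp only [Finset.range_eq_Ico]
      exact (Finset.Ico_union_Ico_eq_Ico (Nat.zero_le _) h1).symm
    rw [hsplit, Finset.filter_union, Finset.card_union_of_disjoint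
      (Finset.disjoint_filter_filter (by
        rw [Finset.range_eq_Ico]; exact Finset.Ico_disjoint_Ico_consecutive 0 (k ^ L) N))]
    have hcongr : Finset.filter (· ∈ S) (Finset.Ico (k ^ L) N) =
        Finset.filter (fun n => n % C < w (L + 1)) (Finset.Ico (k ^ L) N) := by
      apply Finset.filter_congr
      intro x hx
      simp only [Finset.mem_Ico] at hx
      simp [hmem2 L x hx.1 (lt_of_lt_of_le hx.2 h2)]
    rw [hcongr]
    have hcount := DensityAux.Fc_count (hwlt (L + 1)) (k ^ L) N h1
    omega
  have hone : piCount S 1 = 1 := by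
    have hset : S ∩ Set.Iio 1 = {0} := by
      ext n
      simp only [Set.mem_inter_iff, Set.mem_Iio, Nat.lt_one_iff, Set.mem_singleton_iff]
      constructor
      · rintro ⟨-, h⟩; exact h
      · rintro rfl
        refine ⟨?_, rfl⟩
        rw [hmem]
        left
        simp [Nat.digits_zero, Nat.zero_mod]
        omega
    rw [piCount, hset, Set.ncard_singleton]
  -- cast facts
  have hK2 : (2 : ℤ) ≤ (k : ℤ) := by exact_mod_cast hk
  have hCp : (0 : ℤ) < (C : ℤ) := by exact_mod_cast hC
  have hAz : (1 : ℤ) ≤ (A : ℤ) := by exact_mod_cast hA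
  have hABz : (A : ℤ) ≤ (B : ℤ) := by exact_mod_cast hAB
  have hBCz : (B : ℤ) < (C : ℤ) := by exact_mod_cast hBC
  -- invariant at powers
  have hinv : ∀ e : ℕ, |((k : ℤ) + 1) * C * (piCount S (k ^ e)) -
      ((k : ℤ) * w e + w (e + 1)) * (k : ℤ) ^ e| ≤
      ((e : ℤ) + 1) * (((k : ℤ) + 1) * C * C) := by
    intro e
    induction e with
    | zero =>
      have hw0 : w 0 = A := by simp [hwdef]
      have hw1 : w 1 = B := by simp [hwdef]
      rw [hw0, hw1, pow_zero, pow_zero, hone]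
      rw [abs_le]
      push_cast
      have hkC : (k : ℤ) * A ≤ (k : ℤ) * C := by
        apply mul_le_mul_of_nonneg_left (by linarith) (by linarith)
      have hCC : ((k : ℤ) + 1) * C * 1 ≤ ((k : ℤ) + 1) * C * C := by
        apply mul_le_mul_of_nonneg_left (by linarith) (by positivity)
      constructor <;> nlinarith
    | succ e ih =>
      have hkk : 1 ≤ k := by omega
      have hle : k ^ e ≤ k ^ (e + 1) := Nat.pow_le_pow_right hkk (by omega)
      have hs := hstep e (k ^ (e + 1)) hle le_rfl
      have hsz : (piCount S (k ^ (e + 1)) : ℤ) + (DensityAux.Fc C (w (e + 1)) (k ^ e) : ℤ) =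
          (piCount S (k ^ e) : ℤ) + (DensityAux.Fc C (w (e + 1)) (k ^ (e + 1)) : ℤ) := by
        exact_mod_cast hs
      have hb0 := DensityAux.Fc_bound (hwle (e + 1)) (k ^ e)
      have hb1 := DensityAux.Fc_bound (hwle (e + 1)) (k ^ (e + 1))
      push_cast at hb0 hb1
      rw [pow_succ] at hb1
      have hW1C : ((w (e + 1) : ℕ) : ℤ) ≤ (C : ℤ) := by exact_mod_cast hwle (e + 1)
      have hres := DensityAux.step_ineq (k : ℤ) (C : ℤ) (w e : ℤ) (w (e + 1) : ℤ)
        (piCount S (k ^ e) : ℤ) (piCount S (k ^ (e + 1)) : ℤ)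
        (DensityAux.Fc C (w (e + 1)) (k ^ e) : ℤ) (DensityAux.Fc C (w (e + 1)) (k ^ (e + 1)) : ℤ)
        ((k : ℤ) ^ e) (((e : ℤ) + 1) * (((k : ℤ) + 1) * C * C))
        hK2 hCp (by positivity) hW1C hsz hb0.1 hb0.2 hb1.1 hb1.2 ih
      have hE : ((((e : ℕ) + 1 : ℕ) : ℤ) + 1) * (((k : ℤ) + 1) * C * C) =
          ((e : ℤ) + 1) * (((k : ℤ) + 1) * C * C) + ((k : ℤ) + 1) * C * C := by
        push_cast; ring
      rw [hwp e, pow_succ, hE]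
      have : ((k : ℤ) + 1) * (C : ℤ) * C = ((k : ℤ) + 1) * C * C := by ring
      calc |((k : ℤ) + 1) * C * (piCount S (k ^ (e + 1))) -
          ((k : ℤ) * w (e + 1) + w e) * ((k : ℤ) ^ e * k)| ≤
          ((e : ℤ) + 1) * (((k : ℤ) + 1) * C * C) + ((k : ℤ) + 1) * C * C := by
            have := hres; linarith [abs_nonneg (((k : ℤ) + 1) * C * (piCount S (k ^ (e + 1))) -
              ((k : ℤ) * w (e + 1) + w e) * ((k : ℤ) ^ e * k))]
        _ = _ := rfl
  -- general bound
  have hgen : ∀ L N : ℕ, k ^ L ≤ N → N ≤ k ^ (L + 1) →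
      ((k : ℤ) * A + B) * N - (((L : ℤ) + 1) * (((k : ℤ) + 1) * C * C) +
        ((k : ℤ) + 1) * C * C) ≤ ((k : ℤ) + 1) * C * (piCount S N) ∧
      ((k : ℤ) + 1) * C * (piCount S N : ℤ) ≤ ((k : ℤ) * B + A) * N +
        (((L : ℤ) + 1) * (((k : ℤ) + 1) * C * C) + ((k : ℤ) + 1) * C * C) := by
    intro L N h1 h2
    have hs := hstep L N h1 h2
    have hsz : (piCount S N : ℤ) + (DensityAux.Fc C (w (L + 1)) (k ^ L) : ℤ) =
        (piCount S (k ^ L) : ℤ) + (DensityAux.Fc C (w (L + 1)) N : ℤ) := by exact_mod_cast hs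
    have hb0 := DensityAux.Fc_bound (hwle (L + 1)) (k ^ L)
    have hbN := DensityAux.Fc_bound (hwle (L + 1)) N
    push_cast at hb0 hbN
    have hxN : ((k : ℤ)) ^ L ≤ (N : ℤ) := by exact_mod_cast h1
    have hNx : (N : ℤ) ≤ (k : ℤ) ^ L * k := by
      have : (N : ℤ) ≤ ((k ^ (L + 1) : ℕ) : ℤ) := by exact_mod_cast h2
      rw [Nat.cast_pow, pow_succ] at this; exact this
    have hW1C : ((w (L + 1) : ℕ) : ℤ) ≤ (C : ℤ) := by exact_mod_cast hwle (L + 1)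
    have hpar : (((w L : ℕ) : ℤ) = (A : ℤ) ∧ ((w (L + 1) : ℕ) : ℤ) = (B : ℤ)) ∨
        (((w L : ℕ) : ℤ) = (B : ℤ) ∧ ((w (L + 1) : ℕ) : ℤ) = (A : ℤ)) := by
      rcases Nat.mod_two_eq_zero_or_one L with hp | hp
      · left
        have hp1 : (L + 1) % 2 = 1 := by omega
        constructor <;> simp [hwdef, hp, hp1]
      · right
        have hp1 : (L + 1) % 2 = 0 := by omega
        constructor <;> simp [hwdef, hp, hp1]
    exact DensityAux.gen_ineq (k : ℤ) (A : ℤ) (B : ℤ) (C : ℤ) (w L : ℤ) (w (L + 1) : ℤ)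
      (piCount S (k ^ L) : ℤ) (piCount S N : ℤ)
      (DensityAux.Fc C (w (L + 1)) (k ^ L) : ℤ) (DensityAux.Fc C (w (L + 1)) N : ℤ)
      ((k : ℤ) ^ L) (N : ℤ) (((L : ℤ) + 1) * (((k : ℤ) + 1) * C * C))
      hK2 hCp hAz hABz hBCz (by positivity) hW1C hpar hxN hNx hsz
      hb0.1 hb0.2 hbN.1 hbN.2 (hinv L)
  -- real setup
  have hCr : (0 : ℝ) < C := by exact_mod_cast hC
  have hkr : (2 : ℝ) ≤ (k : ℝ) := by exact_mod_cast hk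
  set D : ℝ := ((k : ℝ) + 1) * C with hDdef
  have hDpos : 0 < D := by rw [hDdef]; positivity
  set Er : ℝ := ((k : ℝ) + 1) * C * C with hErdef
  have hErpos : 0 ≤ Er := by rw [hErdef]; positivity
  set l : ℝ := ((k : ℝ) * A + B) / D with hldef
  set u : ℝ := ((k : ℝ) * B + A) / D with hudef
  set f : ℕ → ℝ := fun N => (piCount S N : ℝ) / N with hfdef
  set ε : ℕ → ℝ := fun N => (((Nat.log k N : ℝ) + 2) * Er) / (D * N) with hεdef
  -- eventual bounds
  have hfb : ∀ N : ℕ, 1 ≤ N → l - ε N ≤ f N ∧ f N ≤ u + ε N := by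
    intro N hN
    have h1 : k ^ Nat.log k N ≤ N := Nat.pow_log_le_self k (by omega)
    have h2 : N < k ^ (Nat.log k N + 1) := Nat.lt_pow_succ_log_self hk1 N
    obtain ⟨hg1, hg2⟩ := hgen (Nat.log k N) N h1 h2.le
    have hNr : (0 : ℝ) < N := by exact_mod_cast hN
    have hg1' : ((k : ℝ) * A + B) * N - ((Nat.log k N : ℝ) + 2) * Er ≤
        D * (piCount S N) := by
      rw [hErdef, hDdef]
      have hcast := (Int.cast_le (R := ℝ)).mpr hg1
      push_cast at hcast ⊢
      linarith
    have hg2' : D * (piCount S N) ≤ ((k : ℝ) * B + A) * N + ((Nat.log k N : ℝ) + 2) * Er := by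
      rw [hErdef, hDdef]
      have hcast := (Int.cast_le (R := ℝ)).mpr hg2
      push_cast at hcast ⊢
      linarith
    constructor
    · have := DensityAux.div_low hDpos hNr hg1'
      rw [hldef, hεdef]
      simpa using this
    · have := DensityAux.div_up hDpos hNr hg2'
      rw [hudef, hεdef]
      simpa using this
  -- epsilon tends to zero
  have hlogk : 0 < Real.log k := Real.log_pos (by exact_mod_cast hk1)
  have hlogle : ∀ N : ℕ, 1 ≤ N → (Nat.log k N : ℝ) ≤ Real.log N / Real.log k := by
    intro N hN
    have hkpow : ((k : ℝ)) ^ (Nat.log k N) ≤ N := by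
      exact_mod_cast Nat.pow_log_le_self k (by omega : N ≠ 0)
    rw [le_div_iff₀ hlogk]
    calc (Nat.log k N : ℝ) * Real.log k = Real.log ((k : ℝ) ^ (Nat.log k N)) :=
          (Real.log_pow _ _).symm
      _ ≤ Real.log N := Real.log_le_log (by positivity) hkpow
  have hlogdiv : Tendsto (fun N : ℕ => Real.log N / N) atTop (nhds 0) := by
    have h := Real.isLittleO_log_id_atTop.tendsto_div_nhds_zero
    have := h.comp (tendsto_natCast_atTop_atTop (R := ℝ))
    exact this
  have hinvN : Tendsto (fun N : ℕ => (1 : ℝ) / N) atTop (nhds 0) :=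
    tendsto_const_div_atTop_nhds_zero_nat 1
  have hgtend : Tendsto (fun N : ℕ => (Real.log N / Real.log k + 2) * Er / (D * N))
      atTop (nhds 0) := by
    have comp := (hlogdiv.const_mul (Er / (D * Real.log k))).add
      (hinvN.const_mul (2 * Er / D))
    have hzero : (Er / (D * Real.log k)) * 0 + (2 * Er / D) * 0 = 0 := by ring
    rw [hzero] at comp
    apply comp.congr'
    filter_upwards [eventually_ge_atTop 1] with N hN
    have hNr : (0 : ℝ) < N := by exact_mod_cast hN
    field_simp
  have heps0 : Tendsto ε atTop (nhds 0) := by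
    apply squeeze_zero' (Filter.Eventually.of_forall (fun N => by
      rw [hεdef]; positivity))
      ?_ hgtend
    filter_upwards [eventually_ge_atTop 1] with N hN
    rw [hεdef]
    have hNr : (0 : ℝ) < N := by exact_mod_cast hN
    apply div_le_div_of_nonneg_right ?_ (by positivity) |>.trans_eq rfl
    · exact mul_le_mul_of_nonneg_right (by linarith [hlogle N hN]) hErpos
  -- boundedness of f
  have hf0 : ∀ N, 0 ≤ f N := by
    intro N; rw [hfdef]; positivity
  have hf1 : ∀ N, f N ≤ 1 := by
    intro N
    rcases Nat.eq_zero_or_pos N with rfl | hN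
    · simp [hfdef]
    · have hPle : piCount S N ≤ N := by
        rw [DensityAux.piCount_eq]
        exact le_trans (Finset.card_filter_le _ _) (by rw [Finset.card_range])
      have hNr : (0 : ℝ) < N := by exact_mod_cast hN
      rw [hfdef]
      exact div_le_one_of_le₀ (by exact_mod_cast hPle) hNr.le
  have hbdd_le : IsBoundedUnder (· ≤ ·) atTop f := isBoundedUnder_of ⟨1, hf1⟩
  have hbdd_ge : IsBoundedUnder (· ≥ ·) atTop f := isBoundedUnder_of ⟨0, hf0⟩
  have hev1 : ∀ᶠ N in atTop, l - ε N ≤ f N := by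
    filter_upwards [eventually_ge_atTop 1] with N hN using (hfb N hN).1
  have hev2 : ∀ᶠ N in atTop, f N ≤ u + ε N := by
    filter_upwards [eventually_ge_atTop 1] with N hN using (hfb N hN).2
  have htendlo : Tendsto (fun N => l - ε N) atTop (nhds l) := by
    have := tendsto_const_nhds (x := l) (f := atTop (α := ℕ)) |>.sub heps0
    simpa using this
  have htendup : Tendsto (fun N => u + ε N) atTop (nhds u) := by
    have := tendsto_const_nhds (x := u) (f := atTop (α := ℕ)) |>.add heps0
    simpa using this
  have h_linf_ge : l ≤ atTop.liminf f := by
    have h1 := Filter.liminf_le_liminf hev1 htendlo.isBoundedUnder_ge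
      (hbdd_le.isCoboundedUnder_ge)
    rwa [htendlo.liminf_eq] at h1
  have h_lsup_le : atTop.limsup f ≤ u := by
    have h1 := Filter.limsup_le_limsup hev2 (hbdd_ge.isCoboundedUnder_le)
      htendup.isBoundedUnder_le
    rwa [htendup.limsup_eq] at h1
  -- subsequence at powers
  have hk2r : 1 < (k : ℝ) ^ 2 := one_lt_pow₀ (by linarith) (by norm_num)
  have hk2n : 2 ≤ k ^ 2 := by
    calc 2 ≤ k := hk
      _ = k ^ 1 := (pow_one k).symm
      _ ≤ k ^ 2 := Nat.pow_le_pow_right (by omega) (by omega)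
  have t1 : Tendsto (fun m : ℕ => (m : ℝ) / ((k : ℝ) ^ 2) ^ m) atTop (nhds 0) := by
    have := tendsto_pow_const_div_const_pow_of_one_lt 1 hk2r
    simpa using this
  have t2 : Tendsto (fun m : ℕ => (((k : ℝ) ^ 2)⁻¹) ^ m) atTop (nhds 0) :=
    tendsto_pow_atTop_nhds_zero_of_lt_one (by positivity) (by
      rw [inv_lt_one_iff₀]; right; exact hk2r)
  have hkr0 : (0 : ℝ) < k := by linarith
  have hdelta_even : Tendsto (fun m : ℕ => ((2 * (m : ℝ) + 1) * Er) / (D * (k : ℝ) ^ (2 * m)))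
      atTop (nhds 0) := by
    have comp := (t1.const_mul (2 * Er / D)).add (t2.const_mul (Er / D))
    have hzero : (2 * Er / D) * 0 + (Er / D) * 0 = 0 := by ring
    rw [hzero] at comp
    apply comp.congr
    intro m
    have hy : (0 : ℝ) < ((k : ℝ) ^ 2) ^ m := by positivity
    rw [pow_mul, inv_pow]
    field_simp
  have hdelta_odd : Tendsto (fun m : ℕ => ((2 * (m : ℝ) + 2) * Er) / (D * (k : ℝ) ^ (2 * m + 1)))
      atTop (nhds 0) := by
    have comp := (t1.const_mul (2 * Er / (D * k))).add (t2.const_mul (2 * Er / (D * k)))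
    have hzero : (2 * Er / (D * k)) * 0 + (2 * Er / (D * k)) * 0 = 0 := by ring
    rw [hzero] at comp
    apply comp.congr
    intro m
    have hy : (0 : ℝ) < ((k : ℝ) ^ 2) ^ m := by positivity
    have hpw : (k : ℝ) ^ (2 * m + 1) = ((k : ℝ) ^ 2) ^ m * k := by
      rw [pow_succ, pow_mul]
    rw [hpw, inv_pow]
    field_simp
  have hphi_even : Tendsto (fun m : ℕ => k ^ (2 * m)) atTop atTop := by
    apply tendsto_atTop_mono (fun m => ?_) tendsto_id
    calc m ≤ 2 ^ m := (Nat.lt_two_pow_self (n := m)).le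
      _ ≤ (k ^ 2) ^ m := Nat.pow_le_pow_left hk2n m
      _ = k ^ (2 * m) := by rw [← pow_mul]
  have hphi_odd : Tendsto (fun m : ℕ => k ^ (2 * m + 1)) atTop atTop := by
    apply tendsto_atTop_mono (fun m => ?_) tendsto_id
    calc m ≤ 2 ^ m := (Nat.lt_two_pow_self (n := m)).le
      _ ≤ (k ^ 2) ^ m := Nat.pow_le_pow_left hk2n m
      _ = k ^ (2 * m) := by rw [← pow_mul]
      _ ≤ k ^ (2 * m + 1) := Nat.pow_le_pow_right (by omega) (by omega)
  -- power values
  have hpow_even : ∀ m : ℕ, D * (piCount S (k ^ (2 * m)) : ℝ) ≤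
      ((k : ℝ) * A + B) * (k : ℝ) ^ (2 * m) + (2 * (m : ℝ) + 1) * Er := by
    intro m
    have h := hinv (2 * m)
    have hw0 : w (2 * m) = A := by
      have : (2 * m) % 2 = 0 := by omega
      simp [hwdef, this]
    have hw1 : w (2 * m + 1) = B := by
      have : (2 * m + 1) % 2 = 1 := by omega
      simp [hwdef, this]
    rw [hw0, hw1] at h
    rw [abs_le] at h
    have hcast := (Int.cast_le (R := ℝ)).mpr h.2
    rw [hDdef, hErdef]
    push_cast at hcast ⊢
    linarith
  have hpow_odd : ∀ m : ℕ,
      ((k : ℝ) * B + A) * (k : ℝ) ^ (2 * m + 1) - (2 * (m : ℝ) + 2) * Er ≤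
      D * (piCount S (k ^ (2 * m + 1)) : ℝ) := by
    intro m
    have h := hinv (2 * m + 1)
    have hw0 : w (2 * m + 1) = B := by
      have : (2 * m + 1) % 2 = 1 := by omega
      simp [hwdef, this]
    have hw1 : w (2 * m + 1 + 1) = A := by
      have : (2 * m + 1 + 1) % 2 = 0 := by omega
      simp [hwdef, this]
    rw [hw0, hw1] at h
    rw [abs_le] at h
    have hcast := (Int.cast_le (R := ℝ)).mpr h.1
    rw [hDdef, hErdef]
    push_cast at hcast ⊢
    linarith
  -- frequently bounds
  have hfreq_le : ∀ δ : ℝ, 0 < δ → ∃ᶠ N in atTop, f N ≤ l + δ := by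
    intro δ hδ
    apply hphi_even.frequently
    apply Filter.Eventually.frequently
    filter_upwards [hdelta_even.eventually_lt_const hδ] with m hm
    have hNpos : (0 : ℝ) < (k : ℝ) ^ (2 * m) := by positivity
    have hdu := DensityAux.div_up hDpos hNpos (hpow_even m)
    have hfval : f (k ^ (2 * m)) = (piCount S (k ^ (2 * m)) : ℝ) / ((k : ℝ) ^ (2 * m)) := by
      rw [hfdef]; push_cast; ring_nf
    rw [hfval, hldef]
    calc (piCount S (k ^ (2 * m)) : ℝ) / ((k : ℝ) ^ (2 * m)) ≤
        ((k : ℝ) * A + B) / D + (2 * (m : ℝ) + 1) * Er / (D * (k : ℝ) ^ (2 * m)) := hdu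
      _ ≤ ((k : ℝ) * A + B) / D + δ := by linarith [hm]
  have hfreq_ge : ∀ δ : ℝ, 0 < δ → ∃ᶠ N in atTop, u - δ ≤ f N := by
    intro δ hδ
    apply hphi_odd.frequently
    apply Filter.Eventually.frequently
    filter_upwards [hdelta_odd.eventually_lt_const hδ] with m hm
    have hNpos : (0 : ℝ) < (k : ℝ) ^ (2 * m + 1) := by positivity
    have hdl := DensityAux.div_low hDpos hNpos (hpow_odd m)
    have hfval : f (k ^ (2 * m + 1)) =
        (piCount S (k ^ (2 * m + 1)) : ℝ) / ((k : ℝ) ^ (2 * m + 1)) := by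
      rw [hfdef]; push_cast; ring_nf
    rw [hfval, hudef]
    calc ((k : ℝ) * B + A) / D - δ ≤
        ((k : ℝ) * B + A) / D - (2 * (m : ℝ) + 2) * Er / (D * (k : ℝ) ^ (2 * m + 1)) := by
          linarith [hm]
      _ ≤ (piCount S (k ^ (2 * m + 1)) : ℝ) / ((k : ℝ) ^ (2 * m + 1)) := hdl
  have h_linf_le : atTop.liminf f ≤ l := by
    refine le_of_forall_pos_le_add fun δ hδ => ?_
    exact Filter.liminf_le_of_frequently_le (hfreq_le δ hδ) hbdd_ge
  have h_lsup_ge : u ≤ atTop.limsup f := by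
    refine le_of_forall_pos_le_add fun δ hδ => ?_
    have h1 : u - δ ≤ atTop.limsup f :=
      Filter.le_limsup_of_frequently_le (hfreq_ge δ hδ) hbdd_le
    linarith
  exact ⟨le_antisymm h_linf_le h_linf_ge, le_antisymm h_lsup_le h_lsup_ge⟩
end
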